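/- arXiv:1212.1833 — 4 statements merged into one kernel-verified Lean document; each statement's English description precedes it below -/
import Mathlib

section
/- Let M be a finitely generated left Aₙ(K)-module, ψ_M(t) = a_d t^d + … + a₁t + a₀ the Bernstein polynomial associated with a finite system of generators of M (so ψ_M(r) = dim_K M_r for all large r, where (M_r) is the natural filtration). Then the degree d of ψ_M and the integer d!·a_d do not depend on the choice of the finite system of generators of M. -/
open scoped BigOperators

set_option maxHeartbeats 1000000
set_option synthInstance.maxHeartbeats 400000

/-- The operator of multiplication by the variable `xᵢ` on `K[x₁,…,xₙ]`. -/
noncomputable def mulX (K : Type*) [CommRing K] (n : ℕ) (i : Fin n) :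
    Module.End K (MvPolynomial (Fin n) K) :=
  LinearMap.mulLeft K (MvPolynomial.X i)

/-- The partial differentiation operator `∂ᵢ` on `K[x₁,…,xₙ]`. -/
noncomputable def pdOp (K : Type*) [CommRing K] (n : ℕ) (i : Fin n) :
    Module.End K (MvPolynomial (Fin n) K) :=
  (MvPolynomial.pderiv (R := K) i).toLinearMap

/-- The Weyl algebra `Aₙ(K)`: the `K`-subalgebra of `End_K K[x₁,…,xₙ]`
generated by the multiplication operators `xᵢ` and the derivations `∂ᵢ`. -/
noncomputable def WeylAlgebra (K : Type*) [CommRing K] (n : ℕ) :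
    Subalgebra K (Module.End K (MvPolynomial (Fin n) K)) :=
  Algebra.adjoin K (Set.range (mulX K n) ∪ Set.range (pdOp K n))

/-- The monomial `x^α ∂^β` as an endomorphism of `K[x₁,…,xₙ]`. -/
noncomputable def wMonEnd (K : Type*) [CommRing K] (n : ℕ) (α β : Fin n → ℕ) :
    Module.End K (MvPolynomial (Fin n) K) :=
  (List.ofFn fun i => mulX K n i ^ α i).prod * (List.ofFn fun i => pdOp K n i ^ β i).prod

lemma wMonEnd_mem (K : Type*) [CommRing K] (n : ℕ) (α β : Fin n → ℕ) :
    wMonEnd K n α β ∈ WeylAlgebra K n := by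
  apply mul_mem
  · apply list_prod_mem
    intro D hD
    obtain ⟨i, rfl⟩ := List.mem_ofFn.mp hD
    exact pow_mem (Algebra.subset_adjoin (Set.mem_union_left _ (Set.mem_range_self i))) _
  · apply list_prod_mem
    intro D hD
    obtain ⟨i, rfl⟩ := List.mem_ofFn.mp hD
    exact pow_mem (Algebra.subset_adjoin (Set.mem_union_right _ (Set.mem_range_self i))) _

/-- The monomial `x^α ∂^β` as an element of the Weyl algebra. -/
noncomputable def wMon (K : Type*) [CommRing K] (n : ℕ) (α β : Fin n → ℕ) :
    WeylAlgebra K n :=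
  ⟨wMonEnd K n α β, wMonEnd_mem K n α β⟩

/-- The `r`-th component `W_r` of the Bernstein filtration of `Aₙ(K)`:
the `K`-span of the monomials `x^α ∂^β` with `|α| + |β| ≤ r`. -/
noncomputable def bernW (K : Type*) [Field K] (n : ℕ) (r : ℕ) :
    Submodule K (WeylAlgebra K n) :=
  Submodule.span K {D | ∃ α β : Fin n → ℕ,
    (∑ i, α i) + (∑ i, β i) ≤ r ∧ D = wMon K n α β}

/-- The natural (Bernstein) filtration `M_r = Σᵢ W_r gᵢ` of a module over
the Weyl algebra associated with a system of generators `g`. -/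
noncomputable def bernFil (K : Type*) [Field K] (n : ℕ) (M : Type*) [AddCommGroup M]
    [Module (WeylAlgebra K n) M] [Module K M] [IsScalarTower K (WeylAlgebra K n) M]
    (p : ℕ) (g : Fin p → M) (r : ℕ) : Submodule K M :=
  Submodule.span K {x | ∃ (α β : Fin n → ℕ) (j : Fin p),
    (∑ i, α i) + (∑ i, β i) ≤ r ∧ x = wMon K n α β • g j}

/-- The natural bifiltration `M_{rs} = Σᵢ W_{rs} gᵢ`. -/
noncomputable def biFil (K : Type*) [Field K] (n : ℕ) (M : Type*) [AddCommGroup M]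
    [Module (WeylAlgebra K n) M] [Module K M] [IsScalarTower K (WeylAlgebra K n) M]
    (p : ℕ) (g : Fin p → M) (r s : ℕ) : Submodule K M :=
  Submodule.span K {x | ∃ (α β : Fin n → ℕ) (j : Fin p),
    (∑ i, α i) ≤ r ∧ (∑ i, β i) ≤ s ∧ x = wMon K n α β • g j}

section ListLemmas
variable {M : Type*} [Monoid M]

lemma listC_pow_add : ∀ {n : ℕ} (f : Fin n → M), (∀ i j, Commute (f i) (f j)) →
    ∀ β γ : Fin n → ℕ,
    (List.ofFn fun i => f i ^ (β i + γ i)).prod =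
      (List.ofFn fun i => f i ^ β i).prod * (List.ofFn fun i => f i ^ γ i).prod := by
  intro n
  induction n with
  | zero => intro f hf β γ; simp
  | succ m ih =>
    intro f hf β γ
    rw [List.ofFn_succ, List.ofFn_succ (f := fun i => f i ^ β i),
      List.ofFn_succ (f := fun i => f i ^ γ i)]
    simp only [List.prod_cons]
    rw [ih (fun i => f i.succ) (fun i j => hf _ _) (fun i => β i.succ) (fun i => γ i.succ)]
    have hcomm : Commute (f 0 ^ γ 0) (List.ofFn fun i : Fin m => f i.succ ^ β i.succ).prod := by
      apply Commute.list_prod_right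
      intro x hx
      obtain ⟨i, rfl⟩ := List.mem_ofFn.mp hx
      exact (hf 0 i.succ).pow_pow _ _
    rw [pow_add]
    rw [mul_assoc, mul_assoc, ← mul_assoc (f 0 ^ γ 0), hcomm.eq, mul_assoc]

lemma listC_single : ∀ {n : ℕ} (f : Fin n → M) (i : Fin n),
    (List.ofFn fun k => f k ^ (Pi.single i 1 : Fin n → ℕ) k).prod = f i := by
  intro n
  induction n with
  | zero => exact fun f i => i.elim0
  | succ m ih =>
    intro f i
    rw [List.ofFn_succ]
    simp only [List.prod_cons]
    cases i using Fin.cases with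
    | zero =>
      have h0 : (Pi.single (0 : Fin (m+1)) 1 : Fin (m+1) → ℕ) 0 = 1 := Pi.single_eq_same _ _
      have hs : ∀ k : Fin m, (Pi.single (0 : Fin (m+1)) 1 : Fin (m+1) → ℕ) k.succ = 0 :=
        fun k => Pi.single_eq_of_ne (Fin.succ_ne_zero k) _
      simp only [h0, hs, pow_one, pow_zero]
      rw [show (List.ofFn fun _ : Fin m => (1 : M)) = List.replicate m 1 by
        simp [List.eq_replicate_iff, List.mem_ofFn]]
      rw [List.prod_replicate, one_pow, mul_one]
    | succ j =>
      have h0 : (Pi.single (j.succ : Fin (m+1)) 1 : Fin (m+1) → ℕ) 0 = 0 :=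
        Pi.single_eq_of_ne (Fin.succ_ne_zero j).symm _
      have hs : ∀ k : Fin m, (Pi.single (j.succ : Fin (m+1)) 1 : Fin (m+1) → ℕ) k.succ
          = (Pi.single j 1 : Fin m → ℕ) k := by
        intro k
        simp only [Pi.single_apply, Fin.succ_inj]
      simp only [h0, hs, pow_zero, one_mul]
      exact ih (fun k => f k.succ) j

lemma listC_zero {n : ℕ} (f : Fin n → M) :
    (List.ofFn fun i => f i ^ (0 : ℕ)).prod = 1 := by
  simp only [pow_zero]
  rw [show (List.ofFn fun _ : Fin n => (1 : M)) = List.replicate n 1 by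
    simp [List.eq_replicate_iff, List.mem_ofFn]]
  rw [List.prod_replicate, one_pow]

end ListLemmas

section MulLeftList
variable {K A : Type*} [CommSemiring K] [CommSemiring A] [Algebra K A]

lemma mulLeft_list : ∀ {m : ℕ} (g : Fin m → A),
    (List.ofFn fun i => LinearMap.mulLeft K (g i)).prod = LinearMap.mulLeft K (∏ i, g i) := by
  intro m
  induction m with
  | zero => intro g; simp [LinearMap.mulLeft_one, Module.End.one_eq_id]
  | succ m ih =>
    intro g
    rw [List.ofFn_succ, List.prod_cons, ih (fun i => g i.succ), Fin.prod_univ_succ,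
      LinearMap.mulLeft_mul, Module.End.mul_eq_comp]

end MulLeftList

section Weyl
open MvPolynomial
variable (K : Type*) [CommRing K] (n : ℕ)

/-- x^α as a polynomial -/
noncomputable def monP (α : Fin n → ℕ) : MvPolynomial (Fin n) K := ∏ i, X i ^ α i

/-- ∂^β as an endomorphism -/
noncomputable def prodD (β : Fin n → ℕ) : Module.End K (MvPolynomial (Fin n) K) :=
  (List.ofFn fun i => pdOp K n i ^ β i).prod

lemma wMonEnd_eq (α β : Fin n → ℕ) :
    wMonEnd K n α β = LinearMap.mulLeft K (monP K n α) * prodD K n β := by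
  unfold wMonEnd prodD monP
  congr 1
  simp only [mulX, LinearMap.pow_mulLeft]
  exact mulLeft_list (K := K) (fun i => X i ^ α i)

lemma pdOp_commute (i j : Fin n) : Commute (pdOp K n i) (pdOp K n j) := by
  unfold pdOp
  apply LinearMap.ext
  intro p
  induction p using MvPolynomial.induction_on' with
  | monomial s a =>
    show pderiv i (pderiv j ((monomial s) a)) = pderiv j (pderiv i ((monomial s) a))
    by_cases hij : i = j
    · subst hij; rfl
    · simp only [pderiv_monomial]
      congr 1
      · rw [tsub_tsub, tsub_tsub, add_comm]
      · rw [Finsupp.tsub_apply, Finsupp.tsub_apply, Finsupp.single_apply, Finsupp.single_apply,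
          if_neg hij, if_neg (Ne.symm hij), tsub_zero, tsub_zero]
        ring
  | add p q hp hq =>
    show pderiv i (pderiv j (p + q)) = pderiv j (pderiv i (p + q))
    simp only [map_add]
    simp only [Module.End.mul_apply, Derivation.coeFn_coe] at hp hq
    rw [hp, hq]
lemma prodD_add (β γ : Fin n → ℕ) :
    prodD K n (fun k => β k + γ k) = prodD K n β * prodD K n γ :=
  listC_pow_add (pdOp K n) (pdOp_commute K n) β γ

lemma prodD_single (i : Fin n) : prodD K n (Pi.single i 1) = pdOp K n i :=
  listC_single (pdOp K n) i

lemma prodD_zero : prodD K n 0 = 1 := listC_zero (pdOp K n)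

lemma monP_eq_monomial (α : Fin n → ℕ) :
    monP K n α = monomial (Finsupp.equivFunOnFinite.symm α) 1 := by
  rw [monomial_eq, map_one, one_mul, Finsupp.prod_fintype _ _ (fun i => pow_zero _)]
  rfl

lemma monP_mul_X (i : Fin n) (α : Fin n → ℕ) :
    X i * monP K n α = monP K n (α + Pi.single i 1) := by
  unfold monP
  simp only [Pi.add_apply, pow_add]
  rw [Finset.prod_mul_distrib]
  have h1 : ∏ k, X (R := K) k ^ (Pi.single i 1 : Fin n → ℕ) k = X i := by
    rw [Finset.prod_eq_single i (fun b _ hb => by rw [Pi.single_eq_of_ne hb, pow_zero])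
      (fun h => absurd (Finset.mem_univ i) h)]
    rw [Pi.single_eq_same, pow_one]
  rw [h1, mul_comm]

lemma pderiv_monP (i : Fin n) (α : Fin n → ℕ) :
    pderiv i (monP K n α) = (α i : K) • monP K n (α - Pi.single i 1) := by
  rw [monP_eq_monomial, monP_eq_monomial, pderiv_monomial, one_mul]
  have hsub : Finsupp.equivFunOnFinite.symm α - Finsupp.single i 1
      = Finsupp.equivFunOnFinite.symm (α - Pi.single i 1) := by
    ext k
    rw [Finsupp.tsub_apply]
    simp only [Finsupp.coe_equivFunOnFinite_symm, Finsupp.single_apply, Pi.sub_apply]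
    rw [Pi.single_apply]
    by_cases h : i = k
    · subst h; simp
    · rw [if_neg h, if_neg (Ne.symm h)]
  rw [hsub, MvPolynomial.smul_monomial, smul_eq_mul, mul_one]
  rfl

lemma mulLeft_smul (c : K) (f : MvPolynomial (Fin n) K) :
    LinearMap.mulLeft K (c • f) = c • LinearMap.mulLeft K f := by
  apply LinearMap.ext
  intro g
  simp [LinearMap.mulLeft_apply, smul_mul_assoc]

lemma pdOp_mul_mulLeft (i : Fin n) (f : MvPolynomial (Fin n) K) :
    pdOp K n i * LinearMap.mulLeft K f
      = LinearMap.mulLeft K f * pdOp K n i + LinearMap.mulLeft K (pderiv i f) := by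
  apply LinearMap.ext
  intro g
  show pderiv i (f * g) = f * pderiv i g + (pderiv i f) * g
  rw [pderiv_mul]
  ring

lemma mulX_mul_wMonEnd (i : Fin n) (α β : Fin n → ℕ) :
    mulX K n i * wMonEnd K n α β = wMonEnd K n (α + Pi.single i 1) β := by
  rw [wMonEnd_eq, wMonEnd_eq, ← mul_assoc]
  congr 1
  show LinearMap.mulLeft K (X i) * _ = _
  rw [← monP_mul_X K n i α, LinearMap.mulLeft_mul, Module.End.mul_eq_comp]

lemma pdOp_mul_wMonEnd (i : Fin n) (α β : Fin n → ℕ) :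
    pdOp K n i * wMonEnd K n α β
      = wMonEnd K n α (β + Pi.single i 1)
        + (α i : K) • wMonEnd K n (α - Pi.single i 1) β := by
  have hD : pdOp K n i * prodD K n β = prodD K n (β + Pi.single i 1) := by
    have he : (fun k => (Pi.single i 1 : Fin n → ℕ) k + β k) = β + Pi.single i 1 :=
      funext fun k => add_comm _ _
    rw [← prodD_single K n i, ← prodD_add, he]
  rw [wMonEnd_eq, wMonEnd_eq, wMonEnd_eq, ← mul_assoc, pdOp_mul_mulLeft, add_mul, mul_assoc, hD,
    pderiv_monP, mulLeft_smul, smul_mul_assoc]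

lemma wMonEnd_peel_D (i : Fin n) (α β : Fin n → ℕ) (hβ : β i ≠ 0) :
    wMonEnd K n α β = wMonEnd K n α (β - Pi.single i 1) * pdOp K n i := by
  rw [wMonEnd_eq, wMonEnd_eq, mul_assoc]
  congr 1
  rw [← prodD_single K n i, ← prodD_add]
  congr 1
  funext k
  simp only [Pi.sub_apply, Pi.single_apply]
  by_cases h : k = i
  · subst h; rw [if_pos rfl]; omega
  · simp [h]

lemma wMonEnd_peel_X (i : Fin n) (α : Fin n → ℕ) (hα : α i ≠ 0) :
    wMonEnd K n α 0 = mulX K n i * wMonEnd K n (α - Pi.single i 1) 0 := by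
  rw [mulX_mul_wMonEnd]
  congr 1
  funext k
  simp only [Pi.add_apply, Pi.sub_apply, Pi.single_apply]
  by_cases h : k = i
  · subst h; simp only [if_pos rfl]; simp only [if_true]; omega
  · simp [h]

lemma wMonEnd_zero_zero : wMonEnd K n 0 0 = 1 := by
  rw [wMonEnd_eq, prodD_zero, mul_one]
  unfold monP
  simp only [Pi.zero_apply, pow_zero]
  rw [Finset.prod_const_one, LinearMap.mulLeft_one, Module.End.one_eq_id]

end Weyl
section Filtration
open MvPolynomial
variable (K : Type*) [Field K] (n : ℕ)

lemma monP_single (i : Fin n) : monP K n (Pi.single i 1) = X i := by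
  have := monP_mul_X K n i 0
  rw [show ((0 : Fin n → ℕ) + Pi.single i 1) = Pi.single i 1 from zero_add _] at this
  rw [← this]
  rw [show monP K n 0 = 1 from ?_, mul_one]
  unfold monP
  simp only [Pi.zero_apply, pow_zero]
  exact Finset.prod_const_one

noncomputable def mulXW (i : Fin n) : WeylAlgebra K n :=
  ⟨mulX K n i, Algebra.subset_adjoin (Set.mem_union_left _ (Set.mem_range_self i))⟩

noncomputable def pdOpW (i : Fin n) : WeylAlgebra K n :=
  ⟨pdOp K n i, Algebra.subset_adjoin (Set.mem_union_right _ (Set.mem_range_self i))⟩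

lemma mulXW_eq_wMon (i : Fin n) : mulXW K n i = wMon K n (Pi.single i 1) 0 := by
  apply Subtype.ext
  show mulX K n i = wMonEnd K n (Pi.single i 1) 0
  rw [wMonEnd_eq, prodD_zero, mul_one, monP_single]
  rfl

lemma pdOpW_eq_wMon (i : Fin n) : pdOpW K n i = wMon K n 0 (Pi.single i 1) := by
  apply Subtype.ext
  show pdOp K n i = wMonEnd K n 0 (Pi.single i 1)
  rw [wMonEnd_eq, prodD_single]
  rw [show monP K n 0 = 1 from ?_]
  · rw [LinearMap.mulLeft_one, Module.End.mul_eq_comp, LinearMap.id_comp]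
  · unfold monP
    simp only [Pi.zero_apply, pow_zero]
    exact Finset.prod_const_one

lemma wMon_one : wMon K n 0 0 = 1 := Subtype.ext (wMonEnd_zero_zero K n)

lemma wMon_mulXW (i : Fin n) (α β : Fin n → ℕ) :
    mulXW K n i * wMon K n α β = wMon K n (α + Pi.single i 1) β :=
  Subtype.ext (mulX_mul_wMonEnd K n i α β)

lemma wMon_pdOpW (i : Fin n) (α β : Fin n → ℕ) :
    pdOpW K n i * wMon K n α β
      = wMon K n α (β + Pi.single i 1) + (α i : K) • wMon K n (α - Pi.single i 1) β :=
  Subtype.ext (pdOp_mul_wMonEnd K n i α β)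

lemma wMon_peel_D (i : Fin n) (α β : Fin n → ℕ) (hβ : β i ≠ 0) :
    wMon K n α β = wMon K n α (β - Pi.single i 1) * pdOpW K n i :=
  Subtype.ext (wMonEnd_peel_D K n i α β hβ)

lemma wMon_peel_X (i : Fin n) (α : Fin n → ℕ) (hα : α i ≠ 0) :
    wMon K n α 0 = mulXW K n i * wMon K n (α - Pi.single i 1) 0 :=
  Subtype.ext (wMonEnd_peel_X K n i α hα)

lemma sum_single (i : Fin n) : (∑ k, (Pi.single i 1 : Fin n → ℕ) k) = 1 := by
  rw [Finset.sum_eq_single i (fun b _ hb => Pi.single_eq_of_ne hb _)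
    (fun h => absurd (Finset.mem_univ i) h), Pi.single_eq_same]

lemma sum_add_single (i : Fin n) (β : Fin n → ℕ) :
    (∑ k, (β + Pi.single i 1 : Fin n → ℕ) k) = (∑ k, β k) + 1 := by
  simp only [Pi.add_apply]
  rw [Finset.sum_add_distrib, sum_single]

lemma sum_sub_single_le (i : Fin n) (β : Fin n → ℕ) :
    (∑ k, (β - Pi.single i 1 : Fin n → ℕ) k) ≤ ∑ k, β k :=
  Finset.sum_le_sum fun k _ => Nat.sub_le _ _

lemma sum_sub_single (i : Fin n) (β : Fin n → ℕ) (hβ : β i ≠ 0) :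
    (∑ k, (β - Pi.single i 1 : Fin n → ℕ) k) + 1 = ∑ k, β k := by
  have he : (β - Pi.single i 1) + Pi.single i 1 = β := by
    funext k
    simp only [Pi.add_apply, Pi.sub_apply, Pi.single_apply]
    by_cases h : k = i
    · subst h; simp only [if_pos rfl]; simp only [if_true]; omega
    · simp [h]
  conv_rhs => rw [← he]
  rw [sum_add_single]

lemma wMon_mem_bernW (α β : Fin n → ℕ) (r : ℕ) (h : (∑ i, α i) + (∑ i, β i) ≤ r) :
    wMon K n α β ∈ bernW K n r :=
  Submodule.subset_span ⟨α, β, h, rfl⟩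

lemma bernW_mono {r s : ℕ} (h : r ≤ s) : bernW K n r ≤ bernW K n s :=
  Submodule.span_mono fun D ⟨α, β, hd, hD⟩ => ⟨α, β, le_trans hd h, hD⟩

lemma mulXW_mul_bernW (i : Fin n) (r : ℕ) (w : WeylAlgebra K n) (hw : w ∈ bernW K n r) :
    mulXW K n i * w ∈ bernW K n (r + 1) := by
  induction hw using Submodule.span_induction with
  | mem x hx =>
    obtain ⟨α, β, hd, rfl⟩ := hx
    rw [wMon_mulXW]
    exact wMon_mem_bernW K n _ _ _ (by rw [sum_add_single]; omega)
  | zero => rw [mul_zero]; exact zero_mem _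
  | add x y hx hy ihx ihy => rw [mul_add]; exact add_mem ihx ihy
  | smul c x hx ihx => rw [mul_smul_comm]; exact Submodule.smul_mem _ _ ihx

lemma pdOpW_mul_bernW (i : Fin n) (r : ℕ) (w : WeylAlgebra K n) (hw : w ∈ bernW K n r) :
    pdOpW K n i * w ∈ bernW K n (r + 1) := by
  induction hw using Submodule.span_induction with
  | mem x hx =>
    obtain ⟨α, β, hd, rfl⟩ := hx
    rw [wMon_pdOpW]
    refine add_mem (wMon_mem_bernW K n _ _ _ (by rw [sum_add_single]; omega))
      (Submodule.smul_mem _ _ (wMon_mem_bernW K n _ _ _ ?_))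
    have := sum_sub_single_le n i α
    omega
  | zero => rw [mul_zero]; exact zero_mem _
  | add x y hx hy ihx ihy => rw [mul_add]; exact add_mem ihx ihy
  | smul c x hx ihx => rw [mul_smul_comm]; exact Submodule.smul_mem _ _ ihx

lemma wMon_mul_bernW (d : ℕ) : ∀ (α β : Fin n → ℕ), (∑ i, α i) + (∑ i, β i) = d →
    ∀ (s : ℕ) (w : WeylAlgebra K n), w ∈ bernW K n s → wMon K n α β * w ∈ bernW K n (d + s) := by
  induction d using Nat.strong_induction_on with
  | _ d ih =>
    intro α β hd s w hw
    by_cases hβ : ∃ i, β i ≠ 0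
    · obtain ⟨i, hi⟩ := hβ
      rw [wMon_peel_D K n i α β hi, mul_assoc]
      have h1 : pdOpW K n i * w ∈ bernW K n (s + 1) := pdOpW_mul_bernW K n i s w hw
      have hds : (∑ k, α k) + (∑ k, (β - Pi.single i 1 : Fin n → ℕ) k) = d - 1 := by
        have := sum_sub_single n i β hi
        omega
      have hdlt : d - 1 < d := by
        have := sum_sub_single n i β hi
        omega
      have h2 := ih (d - 1) hdlt α (β - Pi.single i 1) hds (s + 1) _ h1
      refine SetLike.le_def.mp (bernW_mono K n ?_) h2
      omega
    · push_neg at hβ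
      have hβ0 : β = 0 := funext fun k => hβ k
      subst hβ0
      rcases Nat.eq_zero_or_pos d with hd0 | hdpos
      · subst hd0
        have hα0 : α = 0 := by
          funext k
          have : (∑ i, α i) = 0 := by omega
          exact (Finset.sum_eq_zero_iff.mp this) k (Finset.mem_univ k)
        subst hα0
        rw [wMon_one, one_mul, zero_add]
        exact hw
      · have hα : ∃ i, α i ≠ 0 := by
          by_contra hc
          push_neg at hc
          have h3 : (∑ i, α i) = 0 := Finset.sum_eq_zero fun k _ => hc k
          have h0 : (∑ i : Fin n, (0 : Fin n → ℕ) i) = 0 := by simp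
          rw [h0, h3] at hd
          omega
        obtain ⟨i, hi⟩ := hα
        rw [wMon_peel_X K n i α hi, mul_assoc]
        have hds : (∑ k, (α - Pi.single i 1 : Fin n → ℕ) k) + (∑ k, (0 : Fin n → ℕ) k) = d - 1 := by
          have h1 := sum_sub_single n i α hi
          have h2 : (∑ k : Fin n, (0 : Fin n → ℕ) k) = 0 := Finset.sum_const_zero
          rw [h2] at hd ⊢
          omega
        have h2 := ih (d - 1) (by omega) (α - Pi.single i 1) 0 hds s w hw
        have h3 := mulXW_mul_bernW K n i (d - 1 + s) _ h2
        refine SetLike.le_def.mp (bernW_mono K n ?_) h3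
        omega

lemma bernW_mul_bernW {r s : ℕ} (u w : WeylAlgebra K n)
    (hu : u ∈ bernW K n r) (hw : w ∈ bernW K n s) : u * w ∈ bernW K n (r + s) := by
  induction hu using Submodule.span_induction with
  | mem x hx =>
    obtain ⟨α, β, hd, rfl⟩ := hx
    have := wMon_mul_bernW K n _ α β rfl s w hw
    refine SetLike.le_def.mp (bernW_mono K n ?_) this
    omega
  | zero => rw [zero_mul]; exact zero_mem _
  | add x y hx hy ihx ihy => rw [add_mul]; exact add_mem ihx ihy
  | smul c x hx ihx => rw [smul_mul_assoc]; exact Submodule.smul_mem _ _ ihx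

lemma exists_bernW (w : WeylAlgebra K n) : ∃ t, w ∈ bernW K n t := by
  have h := Algebra.adjoin_induction (R := K)
    (s := Set.range (mulX K n) ∪ Set.range (pdOp K n))
    (p := fun x hx => ∃ t, (⟨x, hx⟩ : WeylAlgebra K n) ∈ bernW K n t)
    (fun x hx => ?_) (fun r => ?_) (fun x y _ _ hx hy => ?_) (fun x y _ _ hx hy => ?_) w.2
  · exact h
  · rcases hx with ⟨i, rfl⟩ | ⟨i, rfl⟩
    · refine ⟨1, ?_⟩
      have : (⟨mulX K n i, _⟩ : WeylAlgebra K n) = mulXW K n i := rfl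
      rw [this, mulXW_eq_wMon]
      exact wMon_mem_bernW K n _ _ 1 (by rw [sum_single]; simp)
    · refine ⟨1, ?_⟩
      have : (⟨pdOp K n i, _⟩ : WeylAlgebra K n) = pdOpW K n i := rfl
      rw [this, pdOpW_eq_wMon]
      exact wMon_mem_bernW K n _ _ 1 (by rw [sum_single]; simp)
  · refine ⟨0, ?_⟩
    change algebraMap K (Algebra.adjoin K (Set.range (mulX K n) ∪ Set.range (pdOp K n))) r
      ∈ bernW K n 0
    have h1 : (1 : WeylAlgebra K n) ∈ bernW K n 0 := by
      rw [← wMon_one]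
      exact wMon_mem_bernW K n _ _ 0 (by simp)
    have : algebraMap K (Algebra.adjoin K (Set.range (mulX K n) ∪ Set.range (pdOp K n))) r
        = r • (1 : WeylAlgebra K n) := Algebra.algebraMap_eq_smul_one r
    rw [this]
    exact Submodule.smul_mem _ _ h1
  · obtain ⟨t1, h1⟩ := hx
    obtain ⟨t2, h2⟩ := hy
    exact ⟨max t1 t2, add_mem (bernW_mono K n (le_max_left _ _) h1)
      (bernW_mono K n (le_max_right _ _) h2)⟩
  · obtain ⟨t1, h1⟩ := hx
    obtain ⟨t2, h2⟩ := hy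
    exact ⟨t1 + t2, bernW_mul_bernW K n _ _ h1 h2⟩

end Filtration
section ModuleFil
variable (K : Type*) [Field K] (n : ℕ) (M : Type*) [AddCommGroup M]
  [Module (WeylAlgebra K n) M] [Module K M] [IsScalarTower K (WeylAlgebra K n) M]

lemma weyl_smul_comm (c : K) (u : WeylAlgebra K n) (x : M) : u • c • x = c • u • x := by
  have h1 : c • x = (c • (1 : WeylAlgebra K n)) • x := by rw [smul_assoc, one_smul]
  rw [h1, ← mul_smul, mul_smul_comm, mul_one, smul_assoc]

variable {K n M}

lemma bernFil_mono (p : ℕ) (g : Fin p → M) {r s : ℕ} (h : r ≤ s) :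
    bernFil K n M p g r ≤ bernFil K n M p g s :=
  Submodule.span_mono fun x ⟨α, β, j, hd, hx⟩ => ⟨α, β, j, le_trans hd h, hx⟩

lemma bernW_smul_gen (p : ℕ) (g : Fin p → M) (m : ℕ) (j : Fin p)
    (v : WeylAlgebra K n) (hv : v ∈ bernW K n m) : v • g j ∈ bernFil K n M p g m := by
  induction hv using Submodule.span_induction with
  | mem x hx =>
    obtain ⟨α, β, hd, rfl⟩ := hx
    exact Submodule.subset_span ⟨α, β, j, hd, rfl⟩
  | zero => rw [zero_smul]; exact zero_mem _
  | add x y hx hy ihx ihy => rw [add_smul]; exact add_mem ihx ihy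
  | smul c x hx ihx => rw [smul_assoc]; exact Submodule.smul_mem _ _ ihx

lemma bernW_smul_fil (p : ℕ) (g : Fin p → M) {t s : ℕ} (u : WeylAlgebra K n)
    (hu : u ∈ bernW K n t) (x : M) (hx : x ∈ bernFil K n M p g s) :
    u • x ∈ bernFil K n M p g (t + s) := by
  induction hx using Submodule.span_induction with
  | mem y hy =>
    obtain ⟨α, β, j, hd, rfl⟩ := hy
    rw [← mul_smul]
    exact bernW_smul_gen p g _ j _ (bernW_mul_bernW K n u _ hu (wMon_mem_bernW K n α β s hd))
  | zero => rw [smul_zero]; exact zero_mem _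
  | add x y hx hy ihx ihy => rw [smul_add]; exact add_mem ihx ihy
  | smul c x hx ihx => rw [weyl_smul_comm]; exact Submodule.smul_mem _ _ ihx

lemma bernFil_le_shift (p q : ℕ) (g : Fin p → M) (h : Fin q → M) (s₀ : ℕ)
    (hgen : ∀ j, g j ∈ bernFil K n M q h s₀) (r : ℕ) :
    bernFil K n M p g r ≤ bernFil K n M q h (r + s₀) := by
  rw [bernFil, Submodule.span_le]
  rintro x ⟨α, β, j, hd, rfl⟩
  exact bernW_smul_fil q h _ (wMon_mem_bernW K n α β r hd) _ (hgen j)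

lemma exists_mem_bernFil (q : ℕ) (h : Fin q → M)
    (hh : Submodule.span (WeylAlgebra K n) (Set.range h) = ⊤) (x : M) :
    ∃ s, x ∈ bernFil K n M q h s := by
  let N : Submodule (WeylAlgebra K n) M :=
    { carrier := {x | ∃ s, x ∈ bernFil K n M q h s}
      add_mem' := by
        rintro a b ⟨s₁, h₁⟩ ⟨s₂, h₂⟩
        exact ⟨max s₁ s₂, add_mem (bernFil_mono q h (le_max_left _ _) h₁)
          (bernFil_mono q h (le_max_right _ _) h₂)⟩
      zero_mem' := ⟨0, zero_mem _⟩
      smul_mem' := by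
        rintro w a ⟨s, hs⟩
        obtain ⟨t, ht⟩ := exists_bernW K n w
        exact ⟨t + s, bernW_smul_fil q h w ht a hs⟩ }
  have hle : Submodule.span (WeylAlgebra K n) (Set.range h) ≤ N := by
    rw [Submodule.span_le]
    rintro y ⟨j, rfl⟩
    refine ⟨0, ?_⟩
    have : h j = wMon K n 0 0 • h j := by rw [wMon_one, one_smul]
    rw [this]
    exact Submodule.subset_span ⟨0, 0, j, by simp, rfl⟩
  rw [hh] at hle
  exact hle trivial

lemma bernFil_fd (q : ℕ) (h : Fin q → M) (r : ℕ) :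
    FiniteDimensional K (bernFil K n M q h r) := by
  apply FiniteDimensional.span_of_finite
  have hA : {α : Fin n → ℕ | (∑ i, α i) ≤ r}.Finite := by
    apply Set.Finite.subset (Set.Finite.pi fun _ : Fin n => Set.finite_Iic r)
    intro α hα
    rw [Set.mem_pi]
    intro i _
    exact le_trans (Finset.single_le_sum (f := fun k => α k) (fun k _ => Nat.zero_le _)
      (Finset.mem_univ i)) hα
  have himg := ((hA.prod hA).prod (Set.finite_univ (α := Fin q))).image
    (fun t : ((Fin n → ℕ) × (Fin n → ℕ)) × Fin q => wMon K n t.1.1 t.1.2 • h t.2)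
  apply himg.subset
  rintro x ⟨α, β, j, hd, rfl⟩
  exact ⟨((α, β), j), ⟨⟨by simpa using le_trans (Nat.le_add_right _ _) hd,
    by simpa using le_trans (Nat.le_add_left _ _) hd⟩, trivial⟩, rfl⟩

end ModuleFil
section PolyLemmas
open Filter Polynomial

lemma lcPos (P : ℚ[X]) (hP : ∀ᶠ n : ℕ in atTop, 0 ≤ P.eval (n : ℚ)) (h0 : P ≠ 0) :
    0 < P.leadingCoeff := by
  by_contra hlc
  push_neg at hlc
  rcases eq_or_ne P.natDegree 0 with hd | hd
  · have hc : P = C (P.coeff 0) := P.eq_C_of_natDegree_eq_zero hd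
    have hlc' : P.leadingCoeff = P.coeff 0 := by
      rw [Polynomial.leadingCoeff, hd]
    obtain ⟨n, hn⟩ := hP.exists
    rw [hc] at hn
    simp only [Polynomial.eval_C] at hn
    have : P.coeff 0 ≠ 0 := fun h => h0 (by rw [hc, h, map_zero])
    rw [hlc'] at hlc
    exact this (le_antisymm hlc hn)
  · have hdeg : 0 < P.degree := Polynomial.natDegree_pos_iff_degree_pos.mp (Nat.pos_of_ne_zero hd)
    have htb : Tendsto (fun x : ℚ => eval x P) atTop atBot :=
      P.tendsto_atBot_of_leadingCoeff_nonpos hdeg hlc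
    have hneg : ∀ᶠ x : ℚ in atTop, eval x P < 0 := htb.eventually (eventually_lt_atBot 0)
    have hneg' : ∀ᶠ n : ℕ in atTop, eval (n : ℚ) P < 0 :=
      tendsto_natCast_atTop_atTop.eventually hneg
    obtain ⟨n, h1, h2⟩ := (hP.and hneg').exists
    exact absurd h1 (not_le.mpr h2)

lemma compLinear (p : ℚ[X]) (s : ℚ) :
    (p.comp (X + C s)).degree = p.degree ∧
      (p.comp (X + C s)).leadingCoeff = p.leadingCoeff := by
  rcases eq_or_ne p 0 with rfl | hp
  · simp
  · have hq : (X + C s).natDegree = 1 := natDegree_X_add_C s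
    have hlc : (p.comp (X + C s)).leadingCoeff = p.leadingCoeff := by
      rw [leadingCoeff_comp (by rw [hq]; norm_num), leadingCoeff_X_add_C, one_pow, mul_one]
    have hne : p.comp (X + C s) ≠ 0 := fun h => hp (by
      have := hlc
      rw [h, leadingCoeff_zero] at this
      exact leadingCoeff_eq_zero.mp this.symm)
    refine ⟨?_, hlc⟩
    rw [degree_eq_natDegree hne, degree_eq_natDegree hp, natDegree_comp, hq, mul_one]

lemma keyLex (P Q : ℚ[X]) (hP : ∀ᶠ n : ℕ in atTop, 0 ≤ P.eval (n : ℚ))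
    (h : ∀ᶠ n : ℕ in atTop, P.eval (n : ℚ) ≤ Q.eval (n : ℚ)) :
    P.degree ≤ Q.degree ∧ (P.degree = Q.degree → P.leadingCoeff ≤ Q.leadingCoeff) := by
  rcases eq_or_ne P Q with rfl | hne
  · exact ⟨le_rfl, fun _ => le_rfl⟩
  have hRne : Q - P ≠ 0 := sub_ne_zero.mpr (Ne.symm hne)
  have hR : 0 < (Q - P).leadingCoeff := by
    refine lcPos _ ?_ hRne
    filter_upwards [h] with n hn
    simp [hn]
  constructor
  · by_contra hdeg
    push_neg at hdeg
    have hPne : P ≠ 0 := by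
      rintro rfl
      exact absurd hdeg (not_lt.mpr bot_le)
    have hPlc : 0 < P.leadingCoeff := lcPos P hP hPne
    have hdR : (Q - P).degree = P.degree := by
      have : (Q - P) = -(P - Q) := by ring
      rw [this, degree_neg, degree_sub_eq_left_of_degree_lt hdeg]
    have hlcR : (Q - P).leadingCoeff = -P.leadingCoeff := by
      have : (Q - P) = -(P - Q) := by ring
      rw [this, leadingCoeff_neg]
      have h2 : (P - Q).leadingCoeff = P.leadingCoeff := leadingCoeff_sub_of_degree_lt hdeg
      rw [h2]
    rw [hlcR] at hR
    linarith
  · intro hdeg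
    by_contra hlc
    push_neg at hlc
    have hPne : P ≠ 0 := by
      rintro rfl
      simp only [leadingCoeff_zero] at hlc
      have : Q = 0 := degree_eq_bot.mp (by rw [← hdeg, degree_zero])
      rw [this] at hlc
      simp at hlc
    have hd : P.natDegree = Q.natDegree := natDegree_eq_of_degree_eq hdeg
    have hcoeff : (Q - P).coeff P.natDegree = Q.leadingCoeff - P.leadingCoeff := by
      rw [Polynomial.coeff_sub, Polynomial.leadingCoeff, Polynomial.leadingCoeff, hd]
    have hdRle : (Q - P).natDegree ≤ P.natDegree := by
      refine le_trans (natDegree_sub_le Q P) ?_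
      simp [hd]
    have hcne : (Q - P).coeff P.natDegree ≠ 0 := by rw [hcoeff]; intro hc; linarith [sub_eq_zero.mp hc]
    have hdR : (Q - P).natDegree = P.natDegree :=
      le_antisymm hdRle (le_natDegree_of_ne_zero hcne)
    have : (Q - P).leadingCoeff = Q.leadingCoeff - P.leadingCoeff := by
      rw [Polynomial.leadingCoeff, hdR, hcoeff]
    rw [this] at hR
    linarith
end PolyLemmas

/-- The degree `d` of the Bernstein polynomial of a finitely
generated `Aₙ(K)`-module `M` and the integer `d! · a_d` (where `a_d` is the
leading coefficient) do not depend on the choice of the finite system of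
generators of `M`. -/
theorem bernstein_polynomial_invariants
    (K : Type*) [Field K] [CharZero K] (n : ℕ) (hn : 1 ≤ n)
    (M : Type*) [AddCommGroup M] [Module (WeylAlgebra K n) M]
    [Module K M] [IsScalarTower K (WeylAlgebra K n) M]
    (p q : ℕ) (g : Fin p → M) (h : Fin q → M)
    (hg : Submodule.span (WeylAlgebra K n) (Set.range g) = ⊤)
    (hh : Submodule.span (WeylAlgebra K n) (Set.range h) = ⊤)
    (ψ₁ ψ₂ : Polynomial ℚ)
    (hψ₁ : ∃ r₀ : ℕ, ∀ r : ℕ, r₀ ≤ r →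
      ψ₁.eval (r : ℚ) = Module.finrank K (bernFil K n M p g r))
    (hψ₂ : ∃ r₀ : ℕ, ∀ r : ℕ, r₀ ≤ r →
      ψ₂.eval (r : ℚ) = Module.finrank K (bernFil K n M q h r)) :
    ψ₁.natDegree = ψ₂.natDegree ∧
      (ψ₁.natDegree.factorial : ℚ) * ψ₁.leadingCoeff =
        (ψ₂.natDegree.factorial : ℚ) * ψ₂.leadingCoeff := by
  classical
  obtain ⟨r₁, h₁⟩ := hψ₁
  obtain ⟨r₂, h₂⟩ := hψ₂
  have hg' : ∀ j : Fin p, ∃ s, g j ∈ bernFil K n M q h s :=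
    fun j => exists_mem_bernFil q h hh (g j)
  have hh' : ∀ j : Fin q, ∃ s, h j ∈ bernFil K n M p g s :=
    fun j => exists_mem_bernFil p g hg (h j)
  choose f1 hf1 using hg'
  choose f2 hf2 using hh'
  set s : ℕ := max (Finset.univ.sup f1) (Finset.univ.sup f2) with hs
  have hgh : ∀ r, bernFil K n M p g r ≤ bernFil K n M q h (r + s) :=
    bernFil_le_shift p q g h s (fun j => bernFil_mono q h
      (le_trans (Finset.le_sup (Finset.mem_univ j)) (le_max_left _ _)) (hf1 j))
  have hhg : ∀ r, bernFil K n M q h r ≤ bernFil K n M p g (r + s) :=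
    bernFil_le_shift q p h g s (fun j => bernFil_mono p g
      (le_trans (Finset.le_sup (Finset.mem_univ j)) (le_max_right _ _)) (hf2 j))
  have e1 : ∀ᶠ r : ℕ in Filter.atTop, 0 ≤ ψ₁.eval (r : ℚ) :=
    Filter.eventually_atTop.mpr ⟨r₁, fun r hr => by rw [h₁ r hr]; exact Nat.cast_nonneg _⟩
  have e2 : ∀ᶠ r : ℕ in Filter.atTop, 0 ≤ ψ₂.eval (r : ℚ) :=
    Filter.eventually_atTop.mpr ⟨r₂, fun r hr => by rw [h₂ r hr]; exact Nat.cast_nonneg _⟩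
  set Q₁ := ψ₁.comp (Polynomial.X + Polynomial.C (s : ℚ)) with hQ₁
  set Q₂ := ψ₂.comp (Polynomial.X + Polynomial.C (s : ℚ)) with hQ₂
  have evQ₁ : ∀ r : ℕ, Q₁.eval (r : ℚ) = ψ₁.eval (((r + s : ℕ) : ℚ)) := by
    intro r
    rw [hQ₁, Polynomial.eval_comp]
    push_cast
    simp
  have evQ₂ : ∀ r : ℕ, Q₂.eval (r : ℚ) = ψ₂.eval (((r + s : ℕ) : ℚ)) := by
    intro r
    rw [hQ₂, Polynomial.eval_comp]
    push_cast
    simp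
  have le1 : ∀ᶠ r : ℕ in Filter.atTop, ψ₁.eval (r : ℚ) ≤ Q₂.eval (r : ℚ) := by
    refine Filter.eventually_atTop.mpr ⟨max r₁ r₂, fun r hr => ?_⟩
    rw [h₁ r (le_trans (le_max_left _ _) hr), evQ₂ r, h₂ (r + s) (by omega)]
    haveI := bernFil_fd (K := K) (n := n) q h (r + s)
    exact_mod_cast Submodule.finrank_mono (hgh r)
  have le2 : ∀ᶠ r : ℕ in Filter.atTop, ψ₂.eval (r : ℚ) ≤ Q₁.eval (r : ℚ) := by
    refine Filter.eventually_atTop.mpr ⟨max r₁ r₂, fun r hr => ?_⟩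
    rw [h₂ r (le_trans (le_max_right _ _) hr), evQ₁ r, h₁ (r + s) (by omega)]
    haveI := bernFil_fd (K := K) (n := n) p g (r + s)
    exact_mod_cast Submodule.finrank_mono (hhg r)
  have c1 := compLinear ψ₁ (s : ℚ)
  have c2 := compLinear ψ₂ (s : ℚ)
  have k1 := keyLex ψ₁ Q₂ e1 le1
  have k2 := keyLex ψ₂ Q₁ e2 le2
  have hdeg : ψ₁.degree = ψ₂.degree :=
    le_antisymm (le_trans k1.1 (le_of_eq c2.1)) (le_trans k2.1 (le_of_eq c1.1))
  have hnd : ψ₁.natDegree = ψ₂.natDegree := Polynomial.natDegree_eq_of_degree_eq hdeg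
  have hlc : ψ₁.leadingCoeff = ψ₂.leadingCoeff := by
    have l1 : ψ₁.leadingCoeff ≤ Q₂.leadingCoeff := k1.2 (by rw [c2.1, hdeg])
    have l2 : ψ₂.leadingCoeff ≤ Q₁.leadingCoeff := k2.2 (by rw [c1.1, hdeg])
    rw [c2.2] at l1
    rw [c1.2] at l2
    exact le_antisymm l1 l2
  exact ⟨hnd, by rw [hnd, hlc]⟩
end

section
/- Let m and n be positive integers and A ⊆ ℕ^{m+n}. Then there exists a numerical polynomial ω_A(t₁,t₂) in two variables such that (i) ω_A(r,s) = Card V_A(r,s) for all sufficiently large r, s ∈ ℕ, and (ii) deg ω_A ≤ m+n, deg_{t₁} ω_A ≤ m, and deg_{t₂} ω_A ≤ n. -/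
open scoped BigOperators

/-- A polynomial `f(t₁,t₂) ∈ ℚ[t₁,t₂]` is numerical if `f(r,s) ∈ ℤ` for all
sufficiently large integers `r, s`. -/
def IsNumerical2 (f : MvPolynomial (Fin 2) ℚ) : Prop :=
  ∃ r₀ s₀ : ℤ, ∀ r s : ℤ, r₀ ≤ r → s₀ ≤ s →
    ∃ z : ℤ, MvPolynomial.eval ![(r : ℚ), (s : ℚ)] f = z

/-- The polynomial `C(t+k, k) = (t+k)(t+k-1)⋯(t+1)/k!` in one variable `t`. -/
noncomputable def binomP (k : ℕ) : Polynomial ℚ :=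
  (k.factorial : ℚ)⁻¹ • ∏ j ∈ Finset.range k, (Polynomial.X + Polynomial.C ((j : ℚ) + 1))

/-- The polynomial `C(t+k-c, k) = (t+k-c)(t+k-1-c)⋯(t+1-c)/k!` in `t`. -/
noncomputable def binomShift (k : ℕ) (c : ℤ) : Polynomial ℚ :=
  (k.factorial : ℚ)⁻¹ • ∏ j ∈ Finset.range k, (Polynomial.X + Polynomial.C ((j : ℚ) + 1 - c))

/-- The two-variable polynomial `C(t₁+i, i)·C(t₂+j, j)`. -/
noncomputable def binom2 (i j : ℕ) : MvPolynomial (Fin 2) ℚ :=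
  Polynomial.aeval (MvPolynomial.X 0) (binomP i) *
    Polynomial.aeval (MvPolynomial.X 1) (binomP j)

/-- `C(t₁+m-b, m)·C(t₂+n-c, n)` as a two-variable polynomial. -/
noncomputable def binom2Shift (m : ℕ) (b : ℤ) (n : ℕ) (c : ℤ) : MvPolynomial (Fin 2) ℚ :=
  Polynomial.aeval (MvPolynomial.X 0) (binomShift m b) *
    Polynomial.aeval (MvPolynomial.X 1) (binomShift n c)

/-- For `A ⊆ ℕ^{m+n}`, the set `V_A` of tuples that are not `≥` (componentwise)
any element of `A`. -/
def VA (m n : ℕ) (A : Set (Fin (m + n) → ℕ)) : Set (Fin (m + n) → ℕ) :=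
  {v | ∀ a ∈ A, ¬ a ≤ v}

/-- The subset `V_A(r,s)` of `V_A` consisting of tuples whose first `m`
coordinates sum to at most `r` and last `n` coordinates sum to at most `s`. -/
def VArs (m n : ℕ) (A : Set (Fin (m + n) → ℕ)) (r s : ℕ) : Set (Fin (m + n) → ℕ) :=
  {v | v ∈ VA m n A ∧ (∑ i : Fin m, v (Fin.castAdd n i)) ≤ r ∧
    (∑ j : Fin n, v (Fin.natAdd m j)) ≤ s}

/-- `ω` is the `(m,n)`-dimension polynomial of `A ⊆ ℕ^{m+n}`:
`ω(r,s) = Card V_A(r,s)` for all sufficiently large `r, s ∈ ℕ`. -/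
def IsDimPoly (m n : ℕ) (A : Set (Fin (m + n) → ℕ)) (ω : MvPolynomial (Fin 2) ℚ) : Prop :=
  ∃ r₀ s₀ : ℕ, ∀ r s : ℕ, r₀ ≤ r → s₀ ≤ s →
    MvPolynomial.eval ![(r : ℚ), (s : ℚ)] ω = (VArs m n A r s).ncard

open scoped Classical

lemma eval_aeval (x : Fin 2 → ℚ) (i : Fin 2) (p : Polynomial ℚ) :
    MvPolynomial.eval x (Polynomial.aeval (MvPolynomial.X i) p) = Polynomial.eval (x i) p := by
  have h : (MvPolynomial.eval x).comp (algebraMap ℚ (MvPolynomial (Fin 2) ℚ)) = RingHom.id ℚ := by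
    ext q; simp [MvPolynomial.algebraMap_eq]
  rw [Polynomial.aeval_def, Polynomial.hom_eval₂, h, MvPolynomial.eval_X]
  rfl

lemma prod_range_add_factorial (d k : ℕ) :
    (∏ j ∈ Finset.range k, (d + j + 1)) * d.factorial = (d + k).factorial := by
  induction k with
  | zero => simp
  | succ k ih =>
    rw [Finset.prod_range_succ, mul_right_comm, ih, ← Nat.add_assoc, Nat.factorial_succ,
      Nat.mul_comm]

lemma binomShift_eval (k c r : ℕ) (h : c ≤ r) :
    Polynomial.eval (r : ℚ) (binomShift k (c : ℤ)) = ((r - c + k).choose k : ℚ) := by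
  set d := r - c with hd
  have hr : (r : ℚ) = (d : ℚ) + (c : ℚ) := by
    exact_mod_cast (Nat.sub_add_cancel h).symm
  have key : ((d + k).choose k : ℚ) * (k.factorial : ℚ) * (d.factorial : ℚ)
      = ((d + k).factorial : ℚ) := by
    have := Nat.choose_mul_factorial_mul_factorial (Nat.le_add_left k d)
    rw [Nat.add_sub_cancel] at this
    exact_mod_cast this
  have hprod : (∏ j ∈ Finset.range k, ((r : ℚ) + ((j : ℚ) + 1 - (c : ℚ))))
      = ((d + k).factorial : ℚ) / (d.factorial : ℚ) := by
    have : ∀ j ∈ Finset.range k, (r : ℚ) + ((j : ℚ) + 1 - (c : ℚ)) = ((d + j + 1 : ℕ) : ℚ) := by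
      intro j _; rw [hr]; push_cast; ring
    rw [Finset.prod_congr rfl this, ← Nat.cast_prod,
      eq_div_iff (by exact_mod_cast d.factorial_ne_zero), ← Nat.cast_mul,
      prod_range_add_factorial]
  simp only [binomShift, Polynomial.eval_smul, smul_eq_mul, Polynomial.eval_prod,
    Polynomial.eval_add, Polynomial.eval_X, Polynomial.eval_C, Polynomial.eval_sub,
    Polynomial.eval_one, Int.cast_natCast]
  rw [hprod, ← key]
  field_simp

noncomputable def boxF (k d : ℕ) : Finset (Fin k → ℕ) :=
  (Fintype.piFinset fun _ => Finset.range (d+1)).filter fun u => ∑ i, u i ≤ d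

lemma mem_boxF {k d : ℕ} {u : Fin k → ℕ} : u ∈ boxF k d ↔ ∑ i, u i ≤ d := by
  simp only [boxF, Finset.mem_filter, Fintype.mem_piFinset, Finset.mem_range, Nat.lt_succ_iff,
    and_iff_right_iff_imp]
  intro h i
  exact le_trans (Finset.single_le_sum (fun _ _ => Nat.zero_le _) (Finset.mem_univ i)) h

lemma sum_choose_aux (k d : ℕ) :
    ∑ j ∈ Finset.range (d+1), (j + k).choose k = (d + k + 1).choose (k + 1) := by
  induction d with
  | zero => simp
  | succ d ih =>
    rw [Finset.sum_range_succ, ih]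
    have h3 : d + 1 + k = d + k + 1 := by ring
    have h4 : d + (k + 1) + 1 = (d + k + 1) + 1 := by ring
    rw [h3, Nat.choose_succ_succ (d + k + 1) k]
    simp only [Nat.succ_eq_add_one]
    omega

lemma boxF_card (k d : ℕ) : (boxF k d).card = (d + k).choose k := by
  induction k generalizing d with
  | zero =>
    have : boxF 0 d = {(finZeroElim : Fin 0 → ℕ)} := by
      ext u
      simp only [mem_boxF, Finset.mem_singleton]
      constructor
      · intro _; exact funext fun i => i.elim0
      · intro _; simp
    simp [this]
  | succ k ih =>
    have hdec : boxF (k+1) d =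
        (Finset.range (d+1)).biUnion
          (fun e => (boxF k (d - e)).image (fun u => (Fin.snoc u e : Fin (k+1) → ℕ))) := by
      ext v
      simp only [mem_boxF, Finset.mem_biUnion, Finset.mem_range, Finset.mem_image,
        Nat.lt_succ_iff]
      constructor
      · intro hv
        have hsum : ∑ i, v i = (∑ i : Fin k, v (Fin.castSucc i)) + v (Fin.last k) :=
          Fin.sum_univ_castSucc v
        refine ⟨v (Fin.last k), by omega, Fin.init v, ?_, ?_⟩
        · have h5 : ∑ i : Fin k, Fin.init v i = ∑ i : Fin k, v (Fin.castSucc i) := rfl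
          omega
        · exact Fin.snoc_init_self v
      · rintro ⟨e, he, u, hu, rfl⟩
        have hsum : ∑ i, Fin.snoc u e i
            = (∑ i : Fin k, (Fin.snoc u e : Fin (k+1) → ℕ) (Fin.castSucc i))
              + (Fin.snoc u e : Fin (k+1) → ℕ) (Fin.last k) :=
          Fin.sum_univ_castSucc _
        simp only [Fin.snoc_castSucc, Fin.snoc_last] at hsum
        omega
    rw [hdec, Finset.card_biUnion, ]
    · have : ∀ e ∈ Finset.range (d+1),
          ((boxF k (d - e)).image (fun u => (Fin.snoc u e : Fin (k+1) → ℕ))).card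
            = (d - e + k).choose k := by
        intro e _
        rw [Finset.card_image_of_injective _ (fun u u' h => ?_), ih]
        have := congrArg Fin.init h
        simpa [Fin.init_snoc] using this
      rw [Finset.sum_congr rfl this]
      have hre : ∑ e ∈ Finset.range (d+1), (d - e + k).choose k
          = ∑ j ∈ Finset.range (d+1), (j + k).choose k := by
        have h6 := Finset.sum_range_reflect (fun j => (j + k).choose k) (d+1)
        simpa using h6
      rw [hre, sum_choose_aux k d]
      congr 1
    · intro e he e' he' hne
      simp only [Finset.disjoint_left, Finset.mem_image]
      rintro v ⟨u, _, rfl⟩ ⟨u', _, hv⟩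
      apply hne
      have h7 := congrArg (fun f => f (Fin.last k)) hv
      simpa using h7.symm

def sum1 (m n : ℕ) (v : Fin (m+n) → ℕ) : ℕ := ∑ i : Fin m, v (Fin.castAdd n i)
def sum2 (m n : ℕ) (v : Fin (m+n) → ℕ) : ℕ := ∑ j : Fin n, v (Fin.natAdd m j)

noncomputable def bigBox (m n r s : ℕ) : Finset (Fin (m+n) → ℕ) :=
  Fintype.piFinset fun _ => Finset.range (max r s + 1)

lemma mem_bigBox_of_sums {m n r s : ℕ} {v : Fin (m+n) → ℕ}
    (h1 : sum1 m n v ≤ r) (h2 : sum2 m n v ≤ s) : v ∈ bigBox m n r s := by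
  rw [bigBox, Fintype.mem_piFinset]
  intro idx
  rw [Finset.mem_range, Nat.lt_succ_iff]
  refine Fin.addCases (fun i => ?_) (fun j => ?_) idx
  · exact le_trans (le_trans (Finset.single_le_sum (f := fun i => v (Fin.castAdd n i))
      (fun _ _ => Nat.zero_le _) (Finset.mem_univ i)) h1) (le_max_left r s)
  · exact le_trans (le_trans (Finset.single_le_sum (f := fun j => v (Fin.natAdd m j))
      (fun _ _ => Nat.zero_le _) (Finset.mem_univ j)) h2) (le_max_right r s)

noncomputable def Wbox (m n r s : ℕ) : Finset (Fin (m+n) → ℕ) :=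
  (bigBox m n r s).filter fun v => sum1 m n v ≤ r ∧ sum2 m n v ≤ s

lemma mem_Wbox {m n r s : ℕ} {v : Fin (m+n) → ℕ} :
    v ∈ Wbox m n r s ↔ sum1 m n v ≤ r ∧ sum2 m n v ≤ s := by
  rw [Wbox, Finset.mem_filter, and_iff_right_iff_imp]
  exact fun h => mem_bigBox_of_sums h.1 h.2

lemma cnt_card (m n r s : ℕ) (b : Fin (m+n) → ℕ)
    (h1 : sum1 m n b ≤ r) (h2 : sum2 m n b ≤ s) :
    (((Wbox m n r s)).filter fun v => b ≤ v).card
      = (r - sum1 m n b + m).choose m * (s - sum2 m n b + n).choose n := by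
  rw [← boxF_card m (r - sum1 m n b), ← boxF_card n (s - sum2 m n b), ← Finset.card_product]
  apply Finset.card_bij'
    (i := fun v _ => (fun i => v (Fin.castAdd n i) - b (Fin.castAdd n i),
                      fun j => v (Fin.natAdd m j) - b (Fin.natAdd m j)))
    (j := fun p _ => fun idx => b idx + Fin.append p.1 p.2 idx)
  · -- hi : image of forward map lands in the product
    intro v hv
    rw [Finset.mem_filter, mem_Wbox] at hv
    obtain ⟨⟨hs1, hs2⟩, hbv⟩ := hv
    rw [Finset.mem_product, mem_boxF, mem_boxF]
    dsimp only
    constructor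
    · have key : (∑ i : Fin m, (v (Fin.castAdd n i) - b (Fin.castAdd n i)))
          + sum1 m n b = sum1 m n v := by
        rw [sum1, ← Finset.sum_add_distrib]
        exact Finset.sum_congr rfl fun i _ => Nat.sub_add_cancel (hbv _)
      omega
    · have key : (∑ j : Fin n, (v (Fin.natAdd m j) - b (Fin.natAdd m j)))
          + sum2 m n b = sum2 m n v := by
        rw [sum2, ← Finset.sum_add_distrib]
        exact Finset.sum_congr rfl fun j _ => Nat.sub_add_cancel (hbv _)
      omega
  · -- hj : backward map lands in the filter set
    intro p hp
    rw [Finset.mem_product, mem_boxF, mem_boxF] at hp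
    rw [Finset.mem_filter, mem_Wbox]
    have hsum1 : sum1 m n (fun idx => b idx + Fin.append p.1 p.2 idx)
        = sum1 m n b + ∑ i : Fin m, p.1 i := by
      rw [sum1, sum1, ← Finset.sum_add_distrib]
      exact Finset.sum_congr rfl fun i _ => by rw [Fin.append_left]
    have hsum2 : sum2 m n (fun idx => b idx + Fin.append p.1 p.2 idx)
        = sum2 m n b + ∑ j : Fin n, p.2 j := by
      rw [sum2, sum2, ← Finset.sum_add_distrib]
      exact Finset.sum_congr rfl fun j _ => by rw [Fin.append_right]
    refine ⟨⟨by omega, by omega⟩, fun idx => Nat.le_add_right _ _⟩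
  · -- left inverse
    intro v hv
    rw [Finset.mem_filter] at hv
    funext idx
    refine Fin.addCases (fun i => ?_) (fun j => ?_) idx <;>
      simp only [Fin.append_left, Fin.append_right] <;>
      exact Nat.add_sub_cancel' (hv.2 _)
  · -- right inverse
    intro p hp
    ext i
    · simp [Fin.append_left]
    · simp [Fin.append_right]

lemma chi_prod {k : ℕ} (S : Finset (Fin k → ℕ)) (v : Fin k → ℕ) :
    (∏ b ∈ S, (if b ≤ v then (1:ℤ) else 0)) = if S.sup id ≤ v then 1 else 0 := by
  by_cases h : S.sup id ≤ v
  · rw [if_pos h, Finset.prod_eq_one]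
    intro b hb
    exact if_pos (le_trans (Finset.le_sup (f := id) hb) h)
  · rw [if_neg h]
    rw [Finset.sup_le_iff] at h
    push_neg at h
    obtain ⟨b0, hb0, hb0v⟩ := h
    exact Finset.prod_eq_zero hb0 (if_neg hb0v)

lemma avoid_indicator {k : ℕ} (B : Finset (Fin k → ℕ)) (v : Fin k → ℕ) :
    (if (∀ b ∈ B, ¬ b ≤ v) then (1:ℤ) else 0)
      = ∏ b ∈ B, ((1:ℤ) - if b ≤ v then 1 else 0) := by
  by_cases h : ∀ b ∈ B, ¬ b ≤ v
  · rw [if_pos h, eq_comm, Finset.prod_eq_one]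
    intro b hb
    rw [if_neg (h b hb)]; ring
  · rw [if_neg h]
    push_neg at h
    obtain ⟨b0, hb0, hb0v⟩ := h
    rw [eq_comm]
    apply Finset.prod_eq_zero hb0
    rw [if_pos hb0v]; ring

lemma card_VF (m n r s : ℕ) (B : Finset (Fin (m+n) → ℕ))
    (hr : ∀ S ∈ B.powerset, sum1 m n (S.sup id) ≤ r)
    (hs : ∀ S ∈ B.powerset, sum2 m n (S.sup id) ≤ s) :
    ((((Wbox m n r s)).filter fun v => ∀ b ∈ B, ¬ b ≤ v).card : ℤ)
      = ∑ S ∈ B.powerset, (-1:ℤ)^S.card *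
          ((r - sum1 m n (S.sup id) + m).choose m * (s - sum2 m n (S.sup id) + n).choose n : ℤ) := by
  have step1 : ((((Wbox m n r s)).filter fun v => ∀ b ∈ B, ¬ b ≤ v).card : ℤ)
      = ∑ v ∈ Wbox m n r s, ∏ b ∈ B, ((1:ℤ) - if b ≤ v then 1 else 0) := by
    rw [← Finset.sum_boole]
    exact Finset.sum_congr rfl fun v _ => avoid_indicator B v
  rw [step1]
  have step2 : ∀ v ∈ Wbox m n r s,
      (∏ b ∈ B, ((1:ℤ) - if b ≤ v then 1 else 0))
        = ∑ S ∈ B.powerset, (-1:ℤ)^S.card * (if S.sup id ≤ v then 1 else 0) := by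
    intro v _
    have : ∀ b ∈ B, (1:ℤ) - (if b ≤ v then 1 else 0)
        = (-(if b ≤ v then 1 else 0)) + 1 := fun b _ => by ring
    rw [Finset.prod_congr rfl this, Finset.prod_add]
    refine Finset.sum_congr rfl fun S hS => ?_
    rw [Finset.prod_const_one, mul_one]
    have : (∏ b ∈ S, (-(if b ≤ v then (1:ℤ) else 0)))
        = (-1:ℤ)^S.card * ∏ b ∈ S, (if b ≤ v then (1:ℤ) else 0) := by
      rw [← Finset.prod_const (-1 : ℤ), ← Finset.prod_mul_distrib]
      exact Finset.prod_congr rfl fun b _ => by ring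
    rw [this, chi_prod]
  rw [Finset.sum_congr rfl step2, Finset.sum_comm]
  refine Finset.sum_congr rfl fun S hS => ?_
  rw [← Finset.mul_sum, Finset.sum_boole]
  rw [cnt_card m n r s (S.sup id) (hr S hS) (hs S hS)]
  push_cast
  ring

lemma exists_basis (k : ℕ) (A : Set (Fin k → ℕ)) :
    ∃ B : Finset (Fin k → ℕ), ↑B ⊆ A ∧ ∀ a ∈ A, ∃ b ∈ B, b ≤ a := by
  set M : Set (Fin k → ℕ) := {a | a ∈ A ∧ ∀ c ∈ A, c ≤ a → a ≤ c} with hM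
  have hanti : IsAntichain (· ≤ ·) M := by
    intro a ha b hb hne hle
    exact hne (le_antisymm hle (hb.2 a ha.1 hle))
  have hpwo : M.IsPWO :=
    Set.isPWO_of_wellQuasiOrderedLE M
  have hfin : M.Finite := hanti.finite_of_partiallyWellOrderedOn hpwo
  have key : ∀ N : ℕ, ∀ a ∈ A, (∑ i, a i) < N → ∃ b ∈ M, b ≤ a := by
    intro N
    induction N with
    | zero => intro a _ h; omega
    | succ N ih =>
      intro a ha hlt
      by_cases hm : a ∈ M
      · exact ⟨a, hm, le_rfl⟩
      · have : ¬ ∀ c ∈ A, c ≤ a → a ≤ c := fun h => hm ⟨ha, h⟩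
        push_neg at this
        obtain ⟨c, hc, hca, hnac⟩ := this
        have hstrict : ∑ i, c i < ∑ i, a i := by
          rw [Pi.le_def] at hnac
          push_neg at hnac
          obtain ⟨i0, hi0⟩ := hnac
          exact Finset.sum_lt_sum (fun i _ => hca i) ⟨i0, Finset.mem_univ i0, by omega⟩
        obtain ⟨b, hb, hbc⟩ := ih c hc (by omega)
        exact ⟨b, hb, hbc.trans hca⟩
  refine ⟨hfin.toFinset, ?_, ?_⟩
  · intro b hb
    simp only [Set.Finite.coe_toFinset] at hb
    exact hb.1
  · intro a ha
    obtain ⟨b, hb, hba⟩ := key (∑ i, a i + 1) a ha (by omega)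
    exact ⟨b, Set.Finite.mem_toFinset hfin |>.2 hb, hba⟩

lemma aeval_binomShift (i : Fin 2) (k : ℕ) (c : ℤ) :
    Polynomial.aeval (MvPolynomial.X i : MvPolynomial (Fin 2) ℚ) (binomShift k c) =
      MvPolynomial.C ((k.factorial : ℚ)⁻¹) *
        ∏ j ∈ Finset.range k, (MvPolynomial.X i + MvPolynomial.C ((j:ℚ)+1-c)) := by
  simp [binomShift, map_smul, MvPolynomial.smul_eq_C_mul, Polynomial.aeval_X,
    Polynomial.aeval_C, MvPolynomial.algebraMap_eq]

lemma degreeOf_prod_linear_le (i i' : Fin 2) (k : ℕ) (a : ℕ → ℚ) :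
    MvPolynomial.degreeOf i
        (∏ j ∈ Finset.range k, (MvPolynomial.X i' + MvPolynomial.C (a j))) ≤
      if i = i' then k else 0 := by
  induction k with
  | zero =>
    simp only [Finset.range_zero, Finset.prod_empty]
    have := MvPolynomial.degreeOf_C (1:ℚ) i
    rw [map_one] at this
    simp [this]
  | succ k ih =>
    rw [Finset.prod_range_succ]
    refine le_trans (MvPolynomial.degreeOf_mul_le _ _ _) ?_
    have h2 : MvPolynomial.degreeOf i (MvPolynomial.X i' + MvPolynomial.C (a k))
        ≤ if i = i' then 1 else 0 := by
      refine le_trans (MvPolynomial.degreeOf_add_le _ _ _) ?_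
      rw [max_le_iff, MvPolynomial.degreeOf_X, MvPolynomial.degreeOf_C]
      constructor
      · exact le_rfl
      · exact Nat.zero_le _
    split_ifs at ih h2 ⊢ <;> omega

lemma totalDegree_prod_linear_le (i : Fin 2) (k : ℕ) (a : ℕ → ℚ) :
    (∏ j ∈ Finset.range k, (MvPolynomial.X i + MvPolynomial.C (a j))).totalDegree ≤ k := by
  refine le_trans (MvPolynomial.totalDegree_finset_prod _ _) ?_
  have : ∀ j ∈ Finset.range k,
      (MvPolynomial.X i + MvPolynomial.C (a j) : MvPolynomial (Fin 2) ℚ).totalDegree ≤ 1 :=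
    fun j _ => le_trans (MvPolynomial.totalDegree_add _ _)
      (max_le (le_of_eq (MvPolynomial.totalDegree_X i)) (by simp))
  calc _ ≤ ∑ j ∈ Finset.range k, 1 := Finset.sum_le_sum this
    _ = k := by simp

lemma degreeOf_binom2Shift_fst (m n : ℕ) (b c : ℤ) :
    MvPolynomial.degreeOf 0 (binom2Shift m b n c) ≤ m := by
  rw [binom2Shift, aeval_binomShift, aeval_binomShift]
  refine le_trans (MvPolynomial.degreeOf_mul_le _ _ _) ?_
  refine le_trans (add_le_add (MvPolynomial.degreeOf_mul_le _ _ _)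
    (MvPolynomial.degreeOf_mul_le _ _ _)) ?_
  have p1 := degreeOf_prod_linear_le 0 0 m (fun j => (j:ℚ)+1-b)
  have p2 := degreeOf_prod_linear_le 0 1 n (fun j => (j:ℚ)+1-c)
  rw [if_pos rfl] at p1
  rw [if_neg (by decide)] at p2
  have c1 := MvPolynomial.degreeOf_C ((m.factorial:ℚ))⁻¹ (0 : Fin 2)
  have c2 := MvPolynomial.degreeOf_C ((n.factorial:ℚ))⁻¹ (0 : Fin 2)
  omega

lemma degreeOf_binom2Shift_snd (m n : ℕ) (b c : ℤ) :
    MvPolynomial.degreeOf 1 (binom2Shift m b n c) ≤ n := by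
  rw [binom2Shift, aeval_binomShift, aeval_binomShift]
  refine le_trans (MvPolynomial.degreeOf_mul_le _ _ _) ?_
  refine le_trans (add_le_add (MvPolynomial.degreeOf_mul_le _ _ _)
    (MvPolynomial.degreeOf_mul_le _ _ _)) ?_
  have p1 := degreeOf_prod_linear_le 1 0 m (fun j => (j:ℚ)+1-b)
  have p2 := degreeOf_prod_linear_le 1 1 n (fun j => (j:ℚ)+1-c)
  rw [if_neg (by decide)] at p1
  rw [if_pos rfl] at p2
  have c1 := MvPolynomial.degreeOf_C ((m.factorial:ℚ))⁻¹ (1 : Fin 2)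
  have c2 := MvPolynomial.degreeOf_C ((n.factorial:ℚ))⁻¹ (1 : Fin 2)
  omega

lemma totalDegree_binom2Shift (m n : ℕ) (b c : ℤ) :
    (binom2Shift m b n c).totalDegree ≤ m + n := by
  rw [binom2Shift, aeval_binomShift, aeval_binomShift]
  refine le_trans (MvPolynomial.totalDegree_mul _ _) ?_
  refine le_trans (add_le_add (MvPolynomial.totalDegree_mul _ _)
    (MvPolynomial.totalDegree_mul _ _)) ?_
  have p1 := totalDegree_prod_linear_le 0 m (fun j => (j:ℚ)+1-b)
  have p2 := totalDegree_prod_linear_le 1 n (fun j => (j:ℚ)+1-c)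
  have c1 := MvPolynomial.totalDegree_C (σ := Fin 2) ((m.factorial:ℚ))⁻¹
  have c2 := MvPolynomial.totalDegree_C (σ := Fin 2) ((n.factorial:ℚ))⁻¹
  omega

lemma eval_binom2Shift (r s : ℚ) (m n : ℕ) (b c : ℤ) :
    MvPolynomial.eval ![r, s] (binom2Shift m b n c)
      = Polynomial.eval r (binomShift m b) * Polynomial.eval s (binomShift n c) := by
  rw [binom2Shift, MvPolynomial.eval_mul, eval_aeval, eval_aeval]
  simp

/-- For any `A ⊆ ℕ^{m+n}` there exists a numerical polynomial
`ω_A(t₁,t₂)` with `ω_A(r,s) = Card V_A(r,s)` for all large `r, s ∈ ℕ`, such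
that `deg ω_A ≤ m+n`, `deg_{t₁} ω_A ≤ m` and `deg_{t₂} ω_A ≤ n`. -/
theorem dimension_polynomial_exists
    (m n : ℕ) (hm : 0 < m) (hn : 0 < n) (A : Set (Fin (m + n) → ℕ)) :
    ∃ ω : MvPolynomial (Fin 2) ℚ,
      IsNumerical2 ω ∧ IsDimPoly m n A ω ∧
      ω.totalDegree ≤ m + n ∧ ω.degreeOf 0 ≤ m ∧ ω.degreeOf 1 ≤ n := by
  obtain ⟨B, hBA, hbasis⟩ := exists_basis (m + n) A
  set ω : MvPolynomial (Fin 2) ℚ := ∑ S ∈ B.powerset, MvPolynomial.C ((-1:ℚ)^S.card) *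
      binom2Shift m ((sum1 m n (S.sup id) : ℕ) : ℤ) n ((sum2 m n (S.sup id) : ℕ) : ℤ) with hω
  have hsum1_le : ∀ S ∈ B.powerset, sum1 m n (S.sup id) ≤ sum1 m n (B.sup id) := fun S hS =>
    Finset.sum_le_sum fun i _ => Pi.le_def.1
      (Finset.sup_mono (Finset.mem_powerset.1 hS) : S.sup id ≤ B.sup id) (Fin.castAdd n i)
  have hsum2_le : ∀ S ∈ B.powerset, sum2 m n (S.sup id) ≤ sum2 m n (B.sup id) := fun S hS =>
    Finset.sum_le_sum fun j _ => Pi.le_def.1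
      (Finset.sup_mono (Finset.mem_powerset.1 hS) : S.sup id ≤ B.sup id) (Fin.natAdd m j)
  have hdim : IsDimPoly m n A ω := by
    refine ⟨sum1 m n (B.sup id), sum2 m n (B.sup id), fun r s hr hs => ?_⟩
    have hr' : ∀ S ∈ B.powerset, sum1 m n (S.sup id) ≤ r :=
      fun S hS => le_trans (hsum1_le S hS) hr
    have hs' : ∀ S ∈ B.powerset, sum2 m n (S.sup id) ≤ s :=
      fun S hS => le_trans (hsum2_le S hS) hs
    have hset : VArs m n A r s = ↑((Wbox m n r s).filter fun v => ∀ b ∈ B, ¬ b ≤ v) := by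
      ext v
      simp only [VArs, VA, Set.mem_setOf_eq, Finset.mem_coe, Finset.mem_filter, mem_Wbox,
        sum1, sum2]
      constructor
      · rintro ⟨hav, h1, h2⟩
        exact ⟨⟨h1, h2⟩, fun b hb => hav b (hBA hb)⟩
      · rintro ⟨⟨h1, h2⟩, hbv⟩
        refine ⟨fun a ha hle => ?_, h1, h2⟩
        obtain ⟨b, hbB, hba⟩ := hbasis a ha
        exact hbv b hbB (hba.trans hle)
    rw [hset, Set.ncard_coe_finset]
    have hInt := card_VF m n r s B hr' hs'
    have heval : MvPolynomial.eval ![(r:ℚ),(s:ℚ)] ω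
        = ∑ S ∈ B.powerset, (-1:ℚ)^S.card *
          (((r - sum1 m n (S.sup id) + m).choose m : ℚ)
            * ((s - sum2 m n (S.sup id) + n).choose n : ℚ)) := by
      rw [hω, map_sum]
      refine Finset.sum_congr rfl fun S hS => ?_
      rw [MvPolynomial.eval_mul, MvPolynomial.eval_C, eval_binom2Shift,
        binomShift_eval m _ r (hr' S hS), binomShift_eval n _ s (hs' S hS)]
    rw [heval]
    exact_mod_cast hInt.symm
  refine ⟨ω, ?_, hdim, ?_, ?_, ?_⟩
  · obtain ⟨r₀, s₀, hdim'⟩ := hdim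
    refine ⟨(r₀:ℤ), (s₀:ℤ), fun r s hr hs => ?_⟩
    have hr0 : 0 ≤ r := le_trans (Int.natCast_nonneg r₀) hr
    have hs0 : 0 ≤ s := le_trans (Int.natCast_nonneg s₀) hs
    refine ⟨((VArs m n A r.toNat s.toNat).ncard : ℤ), ?_⟩
    have h1 : (r:ℚ) = ((r.toNat : ℕ) : ℚ) := by
      have := Int.toNat_of_nonneg hr0
      exact_mod_cast this.symm
    have h2 : (s:ℚ) = ((s.toNat : ℕ) : ℚ) := by
      have := Int.toNat_of_nonneg hs0
      exact_mod_cast this.symm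
    rw [h1, h2, hdim' r.toNat s.toNat (by omega) (by omega)]
    push_cast
    ring
  · rw [hω]
    refine le_trans (MvPolynomial.totalDegree_finset_sum _ _) (Finset.sup_le fun S _ => ?_)
    refine le_trans (MvPolynomial.totalDegree_mul _ _) ?_
    have h1 := MvPolynomial.totalDegree_C (σ := Fin 2) ((-1:ℚ)^S.card)
    have h2 := totalDegree_binom2Shift m n ((sum1 m n (S.sup id) : ℕ) : ℤ)
      ((sum2 m n (S.sup id) : ℕ) : ℤ)
    omega
  · rw [hω]
    refine le_trans (MvPolynomial.degreeOf_sum_le _ _ _) (Finset.sup_le fun S _ => ?_)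
    refine le_trans (MvPolynomial.degreeOf_mul_le _ _ _) ?_
    have h1 := MvPolynomial.degreeOf_C ((-1:ℚ)^S.card) (0 : Fin 2)
    have h2 := degreeOf_binom2Shift_fst m n ((sum1 m n (S.sup id) : ℕ) : ℤ)
      ((sum2 m n (S.sup id) : ℕ) : ℤ)
    omega
  · rw [hω]
    refine le_trans (MvPolynomial.degreeOf_sum_le _ _ _) (Finset.sup_le fun S _ => ?_)
    refine le_trans (MvPolynomial.degreeOf_mul_le _ _ _) ?_
    have h1 := MvPolynomial.degreeOf_C ((-1:ℚ)^S.card) (1 : Fin 2)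
    have h2 := degreeOf_binom2Shift_snd m n ((sum1 m n (S.sup id) : ℕ) : ℤ)
      ((sum2 m n (S.sup id) : ℕ) : ℤ)
    omega
end

section
/- Let A = {a₁,…,a_p} be a finite subset of ℕ^{m+n} with aᵢ = (a_{i1},…,a_{i,m+n}). For 0 ≤ l ≤ p let Γ(l,p) denote the set of all l-element subsets of {1,…,p}, and for σ ∈ Γ(l,p) let ā_{σj} = max{a_{ij} : i ∈ σ} for 1 ≤ j ≤ m+n, b_σ = Σ_{j=1}^{m} ā_{σj}, and c_σ = Σ_{j=m+1}^{m+n} ā_{σj}. Then the (m,n)-dimension polynomial of A satisfies ω_A(t₁,t₂) = Σ_{l=0}^{p} (−1)^l Σ_{σ∈Γ(l,p)} C(t₁+m−b_σ, m)·C(t₂+n−c_σ, n). -/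
open scoped BigOperators

/-! ### Auxiliary lemmas -/

open Finset
open scoped Classical

section Aux

lemma prod_range_succ_choose (R k : ℕ) :
    ∏ j ∈ Finset.range k, (R + j + 1) = (R + k).choose k * k.factorial := by
  induction k with
  | zero => simp
  | succ k ih =>
    rw [Finset.prod_range_succ, ih]
    have h := Nat.add_one_mul_choose_eq (R + k) k
    have : (R + k + 1) * (R + k).choose k = (R + k + 1).choose (k + 1) * (k + 1) := by
      simpa using h
    rw [Nat.factorial_succ]
    ring_nf
    ring_nf at this
    nlinarith [this]

lemma eval_binomShift (k : ℕ) (c : ℤ) (R : ℕ) :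
    Polynomial.eval ((R : ℚ) + (c : ℚ)) (binomShift k c) = ((R + k).choose k : ℚ) := by
  rw [binomShift, Polynomial.eval_smul, Polynomial.eval_prod]
  have h1 : ∀ j ∈ Finset.range k,
      Polynomial.eval ((R : ℚ) + (c : ℚ)) (Polynomial.X + Polynomial.C ((j : ℚ) + 1 - c))
        = ((R : ℚ) + j + 1) := by
    intro j _
    simp [Polynomial.eval_add]
    ring
  rw [Finset.prod_congr rfl h1]
  have h2 : ∏ j ∈ Finset.range k, ((R : ℚ) + j + 1)
      = (((R + k).choose k * k.factorial : ℕ) : ℚ) := by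
    rw [← prod_range_succ_choose]
    push_cast
    rfl
  rw [h2]
  have := k.factorial_ne_zero
  push_cast
  field_simp
  rw [smul_eq_mul, one_div, inv_mul_cancel_left₀ (Nat.cast_ne_zero.mpr this)]

/-- the filtered box -/
def box (k R : ℕ) : Finset (Fin k → ℕ) :=
  (Fintype.piFinset fun _ : Fin k => Finset.range (R + 1)).filter fun v => ∑ i, v i ≤ R

lemma mem_box {k R : ℕ} {v : Fin k → ℕ} : v ∈ box k R ↔ ∑ i, v i ≤ R := by
  constructor
  · intro h; exact (Finset.mem_filter.mp h).2
  · intro h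
    refine Finset.mem_filter.mpr ⟨Fintype.mem_piFinset.mpr fun i => ?_, h⟩
    exact Finset.mem_range.mpr (Nat.lt_succ_of_le
      ((Finset.single_le_sum (fun _ _ => Nat.zero_le _) (Finset.mem_univ i)).trans h))

lemma card_box (k R : ℕ) : (box k R).card = (R + k).choose k := by
  induction k generalizing R with
  | zero =>
    rw [show box 0 R = Finset.univ from Finset.eq_univ_of_forall (fun v => mem_box.mpr (by simp))]
    simp
  | succ k ih =>
    rw [Finset.card_eq_sum_card_fiberwise (f := fun v => v 0) (t := Finset.range (R + 1))
      (fun v hv => Finset.mem_range.mpr (Nat.lt_succ_of_le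
        ((Finset.single_le_sum (fun _ _ => Nat.zero_le _) (Finset.mem_univ 0)).trans
          (mem_box.mp hv))))]
    have hfib : ∀ j ∈ Finset.range (R + 1),
        ((box (k+1) R).filter fun v => v 0 = j).card = (box k (R - j)).card := by
      intro j hj
      have hjR : j ≤ R := Nat.lt_succ_iff.mp (Finset.mem_range.mp hj)
      apply Finset.card_bij (fun v _ => Fin.tail v)
      · intro v hv
        obtain ⟨hv1, hv2⟩ := Finset.mem_filter.mp hv
        have hs := mem_box.mp hv1
        rw [Fin.sum_univ_succ] at hs
        refine mem_box.mpr ?_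
        have ht : ∑ i : Fin k, Fin.tail v i = ∑ i : Fin k, v i.succ := rfl
        rw [ht]; omega
      · intro v hv w hw h
        obtain ⟨-, hv2⟩ := Finset.mem_filter.mp hv
        obtain ⟨-, hw2⟩ := Finset.mem_filter.mp hw
        rw [← Fin.cons_self_tail v, ← Fin.cons_self_tail w, hv2, hw2, h]
      · intro w hw
        refine ⟨Fin.cons j w, Finset.mem_filter.mpr ⟨mem_box.mpr ?_, by simp⟩,
          by simp [Fin.tail_cons]⟩
        rw [Fin.sum_univ_succ]
        simp only [Fin.cons_zero, Fin.cons_succ]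
        have := mem_box.mp hw
        omega
    rw [Finset.sum_congr rfl hfib]
    have : ∀ j ∈ Finset.range (R+1), (box k (R - j)).card = (R - j + k).choose k :=
      fun j _ => ih (R - j)
    rw [Finset.sum_congr rfl this]
    have hrefl : ∑ x ∈ Finset.range (R+1), (R - x + k).choose k
        = ∑ x ∈ Finset.range (R+1), (x + k).choose k := by
      rw [← Finset.sum_range_reflect (fun j => (j + k).choose k) (R+1)]
      refine Finset.sum_congr rfl fun j hj => ?_
      have := Finset.mem_range.mp hj
      exact congrArg (Nat.choose · k) (by omega)
    rw [hrefl, Nat.sum_range_add_choose R k, Nat.add_assoc]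

variable (m n : ℕ)

/-- all tuples with the two sum constraints -/
def Dbox (r s : ℕ) : Finset (Fin (m + n) → ℕ) :=
  (Fintype.piFinset fun _ : Fin (m + n) => Finset.range (r + s + 1)).filter
    fun v => (∑ i : Fin m, v (Fin.castAdd n i)) ≤ r ∧ (∑ j : Fin n, v (Fin.natAdd m j)) ≤ s

lemma mem_Dbox {r s : ℕ} {v : Fin (m + n) → ℕ} :
    v ∈ Dbox m n r s ↔ (∑ i : Fin m, v (Fin.castAdd n i)) ≤ r ∧
      (∑ j : Fin n, v (Fin.natAdd m j)) ≤ s := by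
  constructor
  · intro h; exact (Finset.mem_filter.mp h).2
  · rintro ⟨h1, h2⟩
    refine Finset.mem_filter.mpr ⟨Fintype.mem_piFinset.mpr fun i =>
      Finset.mem_range.mpr ?_, h1, h2⟩
    refine Nat.lt_succ_of_le ?_
    induction i using Fin.addCases with
    | left j =>
      exact le_trans (le_trans (Finset.single_le_sum
        (f := fun j : Fin m => v (Fin.castAdd n j)) (fun _ _ => Nat.zero_le _)
        (Finset.mem_univ j)) h1) (Nat.le_add_right r s)
    | right j =>
      exact le_trans (le_trans (Finset.single_le_sum
        (f := fun j : Fin n => v (Fin.natAdd m j)) (fun _ _ => Nat.zero_le _)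
        (Finset.mem_univ j)) h2) (Nat.le_add_left s r)

/-- count of tuples above a fixed lower bound `b` with sum constraints -/
lemma card_filter_le (r s : ℕ) (b : Fin (m + n) → ℕ)
    (hbr : (∑ i : Fin m, b (Fin.castAdd n i)) ≤ r)
    (hbs : (∑ j : Fin n, b (Fin.natAdd m j)) ≤ s) :
    ((Dbox m n r s).filter fun v => b ≤ v).card =
      (r - (∑ i : Fin m, b (Fin.castAdd n i)) + m).choose m *
        (s - (∑ j : Fin n, b (Fin.natAdd m j)) + n).choose n := by
  classical
  set B := ∑ i : Fin m, b (Fin.castAdd n i) with hB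
  set C := ∑ j : Fin n, b (Fin.natAdd m j) with hC
  rw [← card_box m (r - B), ← card_box n (s - C), ← Finset.card_product]
  apply Finset.card_bij
    (fun v _ => (fun j => v (Fin.castAdd n j) - b (Fin.castAdd n j),
                 fun j => v (Fin.natAdd m j) - b (Fin.natAdd m j)))
  · intro v hv
    obtain ⟨hv1, hv2⟩ := Finset.mem_filter.mp hv
    obtain ⟨hs1, hs2⟩ := (mem_Dbox m n).mp hv1
    refine Finset.mem_product.mpr ⟨mem_box.mpr ?_, mem_box.mpr ?_⟩
    · show (∑ j : Fin m, (v (Fin.castAdd n j) - b (Fin.castAdd n j))) ≤ r - B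
      have key : (∑ j : Fin m, (v (Fin.castAdd n j) - b (Fin.castAdd n j))) + B
          = ∑ j : Fin m, v (Fin.castAdd n j) := by
        rw [hB, ← Finset.sum_add_distrib]
        exact Finset.sum_congr rfl fun j _ => Nat.sub_add_cancel (hv2 _)
      omega
    · show (∑ j : Fin n, (v (Fin.natAdd m j) - b (Fin.natAdd m j))) ≤ s - C
      have key : (∑ j : Fin n, (v (Fin.natAdd m j) - b (Fin.natAdd m j))) + C
          = ∑ j : Fin n, v (Fin.natAdd m j) := by
        rw [hC, ← Finset.sum_add_distrib]
        exact Finset.sum_congr rfl fun j _ => Nat.sub_add_cancel (hv2 _)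
      omega
  · intro v hv w hw h
    obtain ⟨-, hv2⟩ := Finset.mem_filter.mp hv
    obtain ⟨-, hw2⟩ := Finset.mem_filter.mp hw
    rw [Pi.le_def] at hv2 hw2
    have h1 := congrArg Prod.fst h
    have h2 := congrArg Prod.snd h
    simp only at h1 h2
    funext i
    induction i using Fin.addCases with
    | left j =>
      have heq : v (Fin.castAdd n j) - b (Fin.castAdd n j)
          = w (Fin.castAdd n j) - b (Fin.castAdd n j) := congrFun h1 j
      have hbv := hv2 (Fin.castAdd n j)
      have hbw := hw2 (Fin.castAdd n j)
      omega
    | right j =>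
      have heq : v (Fin.natAdd m j) - b (Fin.natAdd m j)
          = w (Fin.natAdd m j) - b (Fin.natAdd m j) := congrFun h2 j
      have hbv := hv2 (Fin.natAdd m j)
      have hbw := hw2 (Fin.natAdd m j)
      omega
  · rintro ⟨w₁, w₂⟩ hw
    obtain ⟨hw1, hw2⟩ := Finset.mem_product.mp hw
    have hw1' : (∑ i : Fin m, w₁ i) ≤ r - B := mem_box.mp hw1
    have hw2' : (∑ i : Fin n, w₂ i) ≤ s - C := mem_box.mp hw2
    refine ⟨fun i => b i + Fin.append w₁ w₂ i, Finset.mem_filter.mpr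
      ⟨(mem_Dbox m n).mpr ⟨?_, ?_⟩, fun i => Nat.le_add_right _ _⟩, ?_⟩
    · have : (∑ j : Fin m, (b (Fin.castAdd n j) + Fin.append w₁ w₂ (Fin.castAdd n j)))
          = B + ∑ j : Fin m, w₁ j := by
        rw [Finset.sum_add_distrib, hB]
        congr 1
        exact Finset.sum_congr rfl fun j _ => Fin.append_left w₁ w₂ j
      rw [this]; omega
    · have : (∑ j : Fin n, (b (Fin.natAdd m j) + Fin.append w₁ w₂ (Fin.natAdd m j)))
          = C + ∑ j : Fin n, w₂ j := by
        rw [Finset.sum_add_distrib, hC]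
        congr 1
        exact Finset.sum_congr rfl fun j _ => Fin.append_right w₁ w₂ j
      rw [this]; omega
    · refine Prod.ext ?_ ?_
      · funext j
        simp only [Fin.append_left]
        omega
      · funext j
        simp only [Fin.append_right]
        omega

variable {p : ℕ} (a : Fin p → Fin (m + n) → ℕ)

/-- inclusion–exclusion over the avoided lower bounds -/
lemma inclusion_exclusion (r s : ℕ) :
    ((((Dbox m n r s).filter fun v => ∀ i, ¬ a i ≤ v).card : ℚ))
      = ∑ σ ∈ (Finset.univ : Finset (Fin p)).powerset,
          (-1 : ℚ) ^ σ.card * ((Dbox m n r s).filter fun v => ∀ i ∈ σ, a i ≤ v).card := by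
  have hcard : ∀ (P : (Fin (m + n) → ℕ) → Prop) (inst : DecidablePred P),
      (((Dbox m n r s).filter P).card : ℚ)
        = ∑ v ∈ Dbox m n r s, if P v then (1 : ℚ) else 0 := by
    intro P inst
    rw [Finset.card_filter]
    push_cast
    exact Finset.sum_congr rfl fun v _ => by split <;> simp
  rw [hcard _ _]
  have : ∀ σ ∈ (Finset.univ : Finset (Fin p)).powerset,
      (-1 : ℚ) ^ σ.card * ((Dbox m n r s).filter fun v => ∀ i ∈ σ, a i ≤ v).card
        = ∑ v ∈ Dbox m n r s, (-1 : ℚ) ^ σ.card * (if ∀ i ∈ σ, a i ≤ v then (1:ℚ) else 0) := by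
    intro σ _
    rw [hcard _ _, Finset.mul_sum]
  rw [Finset.sum_congr rfl this, Finset.sum_comm]
  refine Finset.sum_congr rfl fun v _ => ?_
  set Sv := (Finset.univ : Finset (Fin p)).filter (fun i => a i ≤ v) with hSv
  have hiff : ∀ σ : Finset (Fin p), (∀ i ∈ σ, a i ≤ v) ↔ σ ⊆ Sv := by
    intro σ
    constructor
    · intro h i hi
      exact Finset.mem_filter.mpr ⟨Finset.mem_univ i, h i hi⟩
    · intro h i hi
      exact (Finset.mem_filter.mp (h hi)).2
  have step1 : ∑ σ ∈ (Finset.univ : Finset (Fin p)).powerset,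
      (-1 : ℚ) ^ σ.card * (if ∀ i ∈ σ, a i ≤ v then (1:ℚ) else 0)
        = ∑ σ ∈ Sv.powerset, (-1 : ℚ) ^ σ.card := by
    rw [← Finset.sum_subset (Finset.powerset_mono.mpr (Finset.subset_univ Sv))]
    · refine Finset.sum_congr rfl fun σ hσ => ?_
      rw [if_pos ((hiff σ).mpr (Finset.mem_powerset.mp hσ)), mul_one]
    · intro σ _ hσ
      rw [if_neg, mul_zero]
      exact fun h => hσ (Finset.mem_powerset.mpr ((hiff σ).mp h))
  rw [step1]
  have step2 : (∑ σ ∈ Sv.powerset, (-1 : ℚ) ^ σ.card)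
      = ((∑ σ ∈ Sv.powerset, (-1 : ℤ) ^ σ.card : ℤ) : ℚ) := by push_cast; rfl
  rw [step2, Finset.sum_powerset_neg_one_pow_card]
  have hempty : Sv = ∅ ↔ ∀ i, ¬ a i ≤ v := by
    rw [Finset.filter_eq_empty_iff]
    simp
  by_cases h : ∀ i, ¬ a i ≤ v
  · rw [if_pos (hempty.mpr h), if_pos h]; norm_num
  · rw [if_neg (fun he => h (hempty.mp he)), if_neg h]; norm_num

end Aux

section Poly

open MvPolynomial

noncomputable def partialX (y : ℚ) : MvPolynomial (Fin 2) ℚ →+* Polynomial ℚ :=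
  eval₂Hom Polynomial.C (fun i => if i = 0 then Polynomial.X else Polynomial.C y)

noncomputable def partialY (x : ℚ) : MvPolynomial (Fin 2) ℚ →+* Polynomial ℚ :=
  eval₂Hom Polynomial.C (fun i => if i = 0 then Polynomial.C x else Polynomial.X)

lemma eval_partialX (y x : ℚ) (f : MvPolynomial (Fin 2) ℚ) :
    Polynomial.eval x (partialX y f) = eval ![x, y] f := by
  have : (Polynomial.evalRingHom x).comp (partialX y) = eval ![x, y] := by
    apply MvPolynomial.ringHom_ext
    · intro r; simp [partialX]
    · intro i
      fin_cases i <;> simp [partialX]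
  exact congrArg (fun φ => φ f) (congrArg DFunLike.coe this)

lemma eval_partialY (x y : ℚ) (f : MvPolynomial (Fin 2) ℚ) :
    Polynomial.eval y (partialY x f) = eval ![x, y] f := by
  have : (Polynomial.evalRingHom y).comp (partialY x) = eval ![x, y] := by
    apply MvPolynomial.ringHom_ext
    · intro r; simp [partialY]
    · intro i
      fin_cases i <;> simp [partialY]
  exact congrArg (fun φ => φ f) (congrArg DFunLike.coe this)

lemma poly_zero_of_nat_roots (q : Polynomial ℚ) (t₀ : ℕ)
    (h : ∀ t : ℕ, t₀ ≤ t → Polynomial.eval (t : ℚ) q = 0) : q = 0 := by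
  apply Polynomial.eq_zero_of_infinite_isRoot
  apply Set.Infinite.mono (s := (fun t : ℕ => (t : ℚ)) '' Set.Ici t₀)
  · rintro _ ⟨t, ht, rfl⟩
    exact h t ht
  · exact (Set.Ici_infinite t₀).image (fun a _ b _ hab => Nat.cast_injective hab)

lemma grid_eq (f g : MvPolynomial (Fin 2) ℚ) (r₀ s₀ : ℕ)
    (h : ∀ r s : ℕ, r₀ ≤ r → s₀ ≤ s →
      eval ![(r : ℚ), (s : ℚ)] f = eval ![(r : ℚ), (s : ℚ)] g) : f = g := by
  have key : ∀ x y : ℚ, eval ![x, y] (f - g) = 0 := by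
    have step1 : ∀ s : ℕ, s₀ ≤ s → ∀ x : ℚ, eval ![x, (s : ℚ)] (f - g) = 0 := by
      intro s hs x
      rw [← eval_partialX]
      have : partialX (s : ℚ) (f - g) = 0 := by
        apply poly_zero_of_nat_roots _ r₀
        intro r hr
        rw [eval_partialX, map_sub, h r s hr hs, sub_self]
      rw [this, Polynomial.eval_zero]
    intro x y
    rw [← eval_partialY]
    have : partialY x (f - g) = 0 := by
      apply poly_zero_of_nat_roots _ s₀
      intro s hs
      rw [eval_partialY]
      exact step1 s hs x
    rw [this, Polynomial.eval_zero]
  have : ∀ v : Fin 2 → ℚ, eval v (f - g) = eval v 0 := by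
    intro v
    have hv : v = ![v 0, v 1] := by
      funext i; fin_cases i <;> simp
    rw [map_zero, hv]
    exact key (v 0) (v 1)
  exact sub_eq_zero.mp (MvPolynomial.funext this)

lemma eval_aeval_X (v : Fin 2 → ℚ) (i : Fin 2) (q : Polynomial ℚ) :
    MvPolynomial.eval v (Polynomial.aeval (MvPolynomial.X i) q) = Polynomial.eval (v i) q := by
  rw [Polynomial.aeval_def, Polynomial.hom_eval₂, MvPolynomial.eval_X]
  have : (MvPolynomial.eval v).comp (algebraMap ℚ (MvPolynomial (Fin 2) ℚ))
      = RingHom.id ℚ := Subsingleton.elim _ _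
  rw [this]
  rfl

lemma eval_binom2Shift_s8 (x y : ℚ) (mm nn : ℕ) (bb cc : ℤ) :
    MvPolynomial.eval ![x, y] (binom2Shift mm bb nn cc)
      = Polynomial.eval x (binomShift mm bb) * Polynomial.eval y (binomShift nn cc) := by
  rw [binom2Shift, map_mul, eval_aeval_X, eval_aeval_X]
  norm_num

lemma regroup {α : Type*} [Fintype α] [DecidableEq α] (f : Finset α → ℚ) :
    ∑ σ ∈ (Finset.univ : Finset α).powerset, f σ
      = ∑ l ∈ Finset.range (Fintype.card α + 1),
          ∑ σ ∈ (Finset.univ : Finset α).powersetCard l, f σ := by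
  rw [eq_comm]
  have hmaps : ∀ σ ∈ (Finset.univ : Finset α).powerset,
      σ.card ∈ Finset.range (Fintype.card α + 1) := by
    intro σ hσ
    exact Finset.mem_range.mpr (Nat.lt_succ_of_le (by
      simpa using Finset.card_le_card (Finset.mem_powerset.mp hσ)))
  rw [← Finset.sum_fiberwise_of_maps_to hmaps f]
  refine Finset.sum_congr rfl fun l _ => ?_
  rw [Finset.powersetCard_eq_filter]

end Poly

/-- Explicit inclusion–exclusion formula for the
`(m,n)`-dimension polynomial of a finite set `A = {a₁,…,a_p} ⊆ ℕ^{m+n}`: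
`ω_A(t₁,t₂) = Σ_{l=0}^{p} (−1)^l Σ_{σ∈Γ(l,p)} C(t₁+m−b_σ, m)·C(t₂+n−c_σ, n)`,
where for `σ ⊆ {1,…,p}` we set `ā_{σj} = max_{i∈σ} a_{ij}`,
`b_σ = Σ_{j=1}^{m} ā_{σj}` and `c_σ = Σ_{j=m+1}^{m+n} ā_{σj}`. -/


theorem dimension_polynomial_formula
    (m n : ℕ) (hm : 0 < m) (hn : 0 < n) (p : ℕ) (a : Fin p → Fin (m + n) → ℕ)
    (ω : MvPolynomial (Fin 2) ℚ) (hnum : IsNumerical2 ω)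
    (hω : IsDimPoly m n (Set.range a) ω) :
    ω = ∑ l ∈ Finset.range (p + 1), ((-1 : ℚ)) ^ l •
      ∑ σ ∈ Finset.univ.powersetCard l,
        binom2Shift m (∑ j : Fin m, (σ.sup fun i => a i (Fin.castAdd n j) : ℕ) : ℤ)
          n (∑ j : Fin n, (σ.sup fun i => a i (Fin.natAdd m j) : ℕ) : ℤ) := by
  classical
  obtain ⟨r₀, s₀, hgrid⟩ := hω
  set bfun : Finset (Fin p) → ℕ := fun σ => ∑ j : Fin m, σ.sup (fun i => a i (Fin.castAdd n j))
    with hbfun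
  set cfun : Finset (Fin p) → ℕ := fun σ => ∑ j : Fin n, σ.sup (fun i => a i (Fin.natAdd m j))
    with hcfun
  have hbmono : ∀ σ : Finset (Fin p), bfun σ ≤ bfun Finset.univ := fun σ =>
    Finset.sum_le_sum fun j _ => Finset.sup_mono (Finset.subset_univ σ)
  have hcmono : ∀ σ : Finset (Fin p), cfun σ ≤ cfun Finset.univ := fun σ =>
    Finset.sum_le_sum fun j _ => Finset.sup_mono (Finset.subset_univ σ)
  apply grid_eq _ _ (max r₀ (bfun Finset.univ)) (max s₀ (cfun Finset.univ))
  intro r s hr hs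
  have hr₀ : r₀ ≤ r := le_trans (le_max_left _ _) hr
  have hs₀ : s₀ ≤ s := le_trans (le_max_left _ _) hs
  have hbr : ∀ σ : Finset (Fin p), bfun σ ≤ r :=
    fun σ => le_trans (hbmono σ) (le_trans (le_max_right _ _) hr)
  have hcs : ∀ σ : Finset (Fin p), cfun σ ≤ s :=
    fun σ => le_trans (hcmono σ) (le_trans (le_max_right _ _) hs)
  rw [hgrid r s hr₀ hs₀]
  -- identify the cardinality with a finset cardinality
  have hset : VArs m n (Set.range a) r s
      = ↑((Dbox m n r s).filter fun v => ∀ i, ¬ a i ≤ v) := by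
    ext v
    simp only [VArs, VA, Set.mem_setOf_eq, Finset.coe_filter, mem_Dbox m n, Set.mem_range]
    constructor
    · rintro ⟨hva, h1, h2⟩
      exact ⟨⟨h1, h2⟩, fun i => hva (a i) ⟨i, rfl⟩⟩
    · rintro ⟨⟨h1, h2⟩, hva⟩
      refine ⟨?_, h1, h2⟩
      rintro x ⟨i, rfl⟩
      exact hva i
  rw [hset, Set.ncard_coe_finset]
  -- per-σ cardinality
  have hNσ : ∀ σ : Finset (Fin p),
      ((Dbox m n r s).filter fun v => ∀ i ∈ σ, a i ≤ v).card
        = (r - bfun σ + m).choose m * (s - cfun σ + n).choose n := by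
    intro σ
    have hpred : ((Dbox m n r s).filter fun v => ∀ i ∈ σ, a i ≤ v)
        = (Dbox m n r s).filter fun v => (fun j => σ.sup (fun i => a i j)) ≤ v := by
      refine Finset.filter_congr fun v _ => ?_
      rw [Pi.le_def]
      constructor
      · intro h j
        exact Finset.sup_le fun i hi => h i hi j
      · intro h i hi j
        exact le_trans (Finset.le_sup (f := fun i => a i j) hi) (h j)
    rw [hpred, card_filter_le m n r s _ (hbr σ) (hcs σ)]
  -- evaluate each binom2Shift
  have hbin : ∀ σ : Finset (Fin p),
      MvPolynomial.eval ![(r : ℚ), (s : ℚ)]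
          (binom2Shift m (∑ j : Fin m, ((σ.sup fun i => a i (Fin.castAdd n j) : ℕ) : ℤ))
            n (∑ j : Fin n, ((σ.sup fun i => a i (Fin.natAdd m j) : ℕ) : ℤ)))
        = (((Dbox m n r s).filter fun v => ∀ i ∈ σ, a i ≤ v).card : ℚ) := by
    intro σ
    have hb' : (∑ j : Fin m, ((σ.sup fun i => a i (Fin.castAdd n j) : ℕ) : ℤ))
        = ((bfun σ : ℕ) : ℤ) := by rw [hbfun]; push_cast; rfl
    have hc' : (∑ j : Fin n, ((σ.sup fun i => a i (Fin.natAdd m j) : ℕ) : ℤ))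
        = ((cfun σ : ℕ) : ℤ) := by rw [hcfun]; push_cast; rfl
    rw [hb', hc', eval_binom2Shift_s8, hNσ σ]
    have hbrσ := hbr σ
    have hcsσ := hcs σ
    have e1 : (r : ℚ) = ((r - bfun σ : ℕ) : ℚ) + (((bfun σ : ℕ) : ℤ) : ℚ) := by
      have h : (r : ℤ) = ((r - bfun σ : ℕ) : ℤ) + ((bfun σ : ℕ) : ℤ) := by omega
      exact_mod_cast h
    have e2 : (s : ℚ) = ((s - cfun σ : ℕ) : ℚ) + (((cfun σ : ℕ) : ℤ) : ℚ) := by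
      have h : (s : ℤ) = ((s - cfun σ : ℕ) : ℤ) + ((cfun σ : ℕ) : ℤ) := by omega
      exact_mod_cast h
    rw [e1, e2, eval_binomShift m _ (r - bfun σ), eval_binomShift n _ (s - cfun σ)]
    push_cast
    ring
  -- assemble
  rw [inclusion_exclusion m n a r s, map_sum,
    regroup (fun σ => (-1 : ℚ) ^ σ.card *
      (((Dbox m n r s).filter fun v => ∀ i ∈ σ, a i ≤ v).card : ℚ))]
  simp only [Fintype.card_fin]
  refine Finset.sum_congr rfl fun l hl => ?_
  rw [MvPolynomial.smul_eval, map_sum, Finset.mul_sum]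
  refine Finset.sum_congr rfl fun σ hσ => ?_
  rw [(Finset.mem_powersetCard.mp hσ).2]
  congr 1
  exact (hbin σ).symm
end

section
/- Let G = {g₁,…,g_r} be an (x,∂)-Gröbner basis of an Aₙ(K)-submodule N of a free Aₙ(K)-module E with basis e₁,…,e_m. If f ∈ N and f is (x,∂)-reduced with respect to G, then f = 0. -/
open scoped BigOperators

set_option maxHeartbeats 1000000
set_option synthInstance.maxHeartbeats 400000

/-- The index of a monomial `x^α ∂^β` of the Weyl algebra: the pair `(α, β)`. -/
abbrev WMon (n : ℕ) := (Fin n → ℕ) × (Fin n → ℕ)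

/-- `ord_x (x^α ∂^β) = |α|`. -/
def ordX {n : ℕ} (θ : WMon n) : ℕ := ∑ i, θ.1 i

/-- `ord_∂ (x^α ∂^β) = |β|`. -/
def ordD {n : ℕ} (θ : WMon n) : ℕ := ∑ i, θ.2 i

/-- Lexicographic comparison of exponent vectors. -/
def lexLt {n : ℕ} (f g : Fin n → ℕ) : Prop :=
  ∃ i, (∀ j, j < i → f j = g j) ∧ f i < g i

/-- The order `<_x` on monomials: lexicographic comparison of
`(ord_x θ, ord_∂ θ, α₁,…,αₙ, β₁,…,βₙ)`. -/
def monLtX {n : ℕ} (θ θ' : WMon n) : Prop :=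
  ordX θ < ordX θ' ∨ (ordX θ = ordX θ' ∧ (ordD θ < ordD θ' ∨ (ordD θ = ordD θ' ∧
    (lexLt θ.1 θ'.1 ∨ (θ.1 = θ'.1 ∧ lexLt θ.2 θ'.2)))))

/-- The order `<_∂` on monomials: lexicographic comparison of
`(ord_∂ θ, ord_x θ, β₁,…,βₙ, α₁,…,αₙ)`. -/
def monLtD {n : ℕ} (θ θ' : WMon n) : Prop :=
  ordD θ < ordD θ' ∨ (ordD θ = ordD θ' ∧ (ordX θ < ordX θ' ∨ (ordX θ = ordX θ' ∧
    (lexLt θ.2 θ'.2 ∨ (θ.2 = θ'.2 ∧ lexLt θ.1 θ'.1)))))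

/-- Divisibility of monomials: componentwise comparison of exponents. -/
def monDvd {n : ℕ} (θ θ' : WMon n) : Prop := θ.1 ≤ θ'.1 ∧ θ.2 ≤ θ'.2

/-- The quotient `θ'/θ` of monomials (componentwise truncated subtraction). -/
def monQuot {n : ℕ} (θ' θ : WMon n) : WMon n := (θ'.1 - θ.1, θ'.2 - θ.2)

/-- The (commutative) product of monomial indices. -/
def monMul {n : ℕ} (θ θ' : WMon n) : WMon n := (θ.1 + θ'.1, θ.2 + θ'.2)

/-- The least common multiple of two monomials. -/
def monLcm {n : ℕ} (θ θ' : WMon n) : WMon n := (θ.1 ⊔ θ'.1, θ.2 ⊔ θ'.2)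

/-- The index of a term `θ eⱼ` of a free module with basis `e₁,…,e_m`. -/
abbrev WTerm (n m : ℕ) := WMon n × Fin m

/-- The order `<_x` on terms. -/
def termLtX {n m : ℕ} (t t' : WTerm n m) : Prop :=
  monLtX t.1 t'.1 ∨ (t.1 = t'.1 ∧ t.2 < t'.2)

/-- The order `<_∂` on terms. -/
def termLtD {n m : ℕ} (t t' : WTerm n m) : Prop :=
  monLtD t.1 t'.1 ∨ (t.1 = t'.1 ∧ t.2 < t'.2)

/-- `t` divides `t'` as terms: same basis vector, dividing monomial. -/
def termDvd {n m : ℕ} (t t' : WTerm n m) : Prop := t.2 = t'.2 ∧ monDvd t.1 t'.1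

/-- Multiplication of a term by a monomial (on the level of indices). -/
def termMulMon {n m : ℕ} (θ : WMon n) (t : WTerm n m) : WTerm n m := (monMul θ t.1, t.2)

/-- The monomial quotient `t'/t` of two terms. -/
def termQuot {n m : ℕ} (t' t : WTerm n m) : WMon n := monQuot t'.1 t.1

/-- The monomial `x^α ∂^β` of the Weyl algebra indexed by `θ = (α, β)`. -/
noncomputable def wMonOf (K : Type*) [CommRing K] (n : ℕ) (θ : WMon n) :
    WeylAlgebra K n := wMon K n θ.1 θ.2

section Groebner

variable {K : Type*} [Field K] [CharZero K] {n m : ℕ}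
variable {E : Type*} [AddCommGroup E] [Module (WeylAlgebra K n) E]
  [Module K E] [IsScalarTower K (WeylAlgebra K n) E]

/-- `t` is the `x`-leader `u_f` of `f`: `t` appears in `f` and every other
term appearing in `f` is smaller with respect to `<_x`. -/
def IsXLeader (B : Module.Basis (WTerm n m) K E) (f : E) (t : WTerm n m) : Prop :=
  B.repr f t ≠ 0 ∧ ∀ t', B.repr f t' ≠ 0 → t' = t ∨ termLtX t' t

/-- `t` is the `∂`-leader `v_f` of `f`. -/
def IsDLeader (B : Module.Basis (WTerm n m) K E) (f : E) (t : WTerm n m) : Prop :=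
  B.repr f t ≠ 0 ∧ ∀ t', B.repr f t' ≠ 0 → t' = t ∨ termLtD t' t

/-- `f` is `(x,∂)`-reduced with respect to `g`: `f` contains no multiple
`θ u_g` of `u_g` with `ord_∂(θ v_g) ≤ ord_∂ v_f`. -/
def IsXDReducedWrt (B : Module.Basis (WTerm n m) K E) (f g : E) : Prop :=
  ∀ w u v vf, B.repr f w ≠ 0 → IsXLeader B g u → IsDLeader B g v →
    IsDLeader B f vf → termDvd u w →
    ¬ (ordD (termQuot w u) + ordD v.1 ≤ ordD vf.1)

/-- `G` is an `(x,∂)`-Gröbner basis of the submodule `N`: the `G i` are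
nonzero elements of `N` and for every nonzero `f ∈ N` there is `i` with
`ρ(G i) ∣ ρ(f)`, i.e. `u_{G i} ∣ u_f` and `d(G i) ≤ d(f)` where
`d(h) = ord_∂ v_h − ord_∂ u_h`. -/
def IsXDGroebnerBasis (B : Module.Basis (WTerm n m) K E) {r : ℕ} (G : Fin r → E)
    (N : Submodule (WeylAlgebra K n) E) : Prop :=
  (∀ i, G i ≠ 0) ∧ (∀ i, G i ∈ N) ∧
  ∀ f ∈ N, f ≠ 0 → ∃ (i : Fin r) (uf vf ui vi : WTerm n m),
    IsXLeader B f uf ∧ IsDLeader B f vf ∧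
    IsXLeader B (G i) ui ∧ IsDLeader B (G i) vi ∧
    termDvd ui uf ∧
    (ordD vi.1 : ℤ) - (ordD ui.1 : ℤ) ≤ (ordD vf.1 : ℤ) - (ordD uf.1 : ℤ)

/-- One step of `(x,∂)`-reduction of `f` modulo `g`, producing `h`. -/
def XDReducesOneStep (B : Module.Basis (WTerm n m) K E) (g f h : E) : Prop :=
  ∃ (w u v vf : WTerm n m),
    B.repr f w ≠ 0 ∧ IsXLeader B g u ∧ IsDLeader B g v ∧ IsDLeader B f vf ∧
    termDvd u w ∧ ordD (termQuot w u) + ordD v.1 ≤ ordD vf.1 ∧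
    h = f - (B.repr f w * (B.repr g u)⁻¹) • (wMonOf K n (termQuot w u) • g)

/-- `f` `(x,∂)`-reduces to `h` modulo the finite family `G`. -/
def XDReducesTo (B : Module.Basis (WTerm n m) K E) {r : ℕ} (G : Fin r → E) (f h : E) : Prop :=
  Relation.ReflTransGen (fun f' h' => ∃ i, XDReducesOneStep B (G i) f' h') f h

/-- `S` is the `x`-`S`-polynomial `S_x(f, g)`. -/
def IsSPolyX (B : Module.Basis (WTerm n m) K E) (f g S : E) : Prop :=
  ∃ uf ug : WTerm n m, IsXLeader B f uf ∧ IsXLeader B g ug ∧ uf.2 = ug.2 ∧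
    S = (B.repr f uf)⁻¹ • (wMonOf K n (monQuot (monLcm uf.1 ug.1) uf.1) • f) -
        (B.repr g ug)⁻¹ • (wMonOf K n (monQuot (monLcm uf.1 ug.1) ug.1) • g)

/-- `G` is a Gröbner basis of `N` with respect to the term order `<_∂`
(the usual notion): the `G i` are nonzero elements of `N`, and the `∂`-leader
of every nonzero `f ∈ N` is a multiple of some `v_{G i}`. -/
def IsDGroebnerBasis (B : Module.Basis (WTerm n m) K E) {r : ℕ} (G : Fin r → E)
    (N : Submodule (WeylAlgebra K n) E) : Prop :=
  (∀ i, G i ≠ 0) ∧ (∀ i, G i ∈ N) ∧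
  ∀ f ∈ N, f ≠ 0 → ∃ (i : Fin r) (vf vi : WTerm n m),
    IsDLeader B f vf ∧ IsDLeader B (G i) vi ∧ termDvd vi vf

end Groebner

/-- (Theorem 4.8(ii).) If `G` is an `(x,∂)`-Gröbner basis of
a submodule `N` of a free `Aₙ(K)`-module `E`, `f ∈ N`, and `f` is
`(x,∂)`-reduced with respect to `G`, then `f = 0`. -/
theorem xd_reduced_mem_eq_zero
    (K : Type*) [Field K] [CharZero K] (n m : ℕ) (hn : 1 ≤ n) (hm : 1 ≤ m)
    (E : Type*) [AddCommGroup E] [Module (WeylAlgebra K n) E]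
    [Module K E] [IsScalarTower K (WeylAlgebra K n) E]
    (B : Module.Basis (WTerm n m) K E)
    (hB : ∀ (θ : WMon n) (j : Fin m), B (θ, j) = wMonOf K n θ • B ((0 : WMon n), j))
    (N : Submodule (WeylAlgebra K n) E)
    (r : ℕ) (G : Fin r → E) (hG : IsXDGroebnerBasis B G N)
    (f : E) (hf : f ∈ N) (hred : ∀ i, IsXDReducedWrt B f (G i)) :
    f = 0 := by
  by_contra hne
  obtain ⟨i, uf, vf, ui, vi, huf, hvf, hui, hvi, hdvd, hd⟩ := hG.2.2 f hf hne
  refine hred i uf ui vi vf huf.1 hui hvi hvf hdvd ?_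
  have hle : ui.1.2 ≤ uf.1.2 := hdvd.2.2
  have hsum : ∀ j, ui.1.2 j ≤ uf.1.2 j := fun j => hle j
  have hquot : ordD (termQuot uf ui) = ordD uf.1 - ordD ui.1 := by
    unfold ordD termQuot monQuot
    simp only
    rw [eq_tsub_iff_add_eq_of_le]
    · rw [← Finset.sum_add_distrib]
      exact Finset.sum_congr rfl fun j _ => Nat.sub_add_cancel (hsum j)
    · exact Finset.sum_le_sum fun j _ => hsum j
  have hord : ordD ui.1 ≤ ordD uf.1 := Finset.sum_le_sum fun j _ => hsum j
  rw [hquot]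
  omega
end
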